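/- arXiv:1708.08775 — 4 statements merged into one kernel-verified Lean document; each statement's English description precedes it below -/
import Mathlib

section
/- If ε = (ε₁,...,ε_N) is a k-wise independent Rademacher vector with k even, p ≥ k ≥ 2, and a ∈ ℝ^N, then (E|∑ᵢ aᵢεᵢ|^p)^{1/p} ≤ C(k)^{k/p} · N^{1/2 − k/(2p)} · ‖a‖₂, where C(k) is the optimal constant in the classical Khintchine inequality for exponent k. -/
open MeasureTheory ENNReal

noncomputable section

/-- A family `ε` of ±1-valued (Rademacher) random variables which is `k`-wise independent:
every collection of at most `k` coordinates takes any prescribed pattern of signs with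
probability `(1/2)^(number of coordinates)`. -/
def IsKWiseRademacher {Ω : Type*} [MeasurableSpace Ω] (μ : Measure Ω)
    {ι : Type*} [DecidableEq ι] (k : ℕ) (ε : ι → Ω → ℝ) : Prop :=
  (∀ i, Measurable (ε i)) ∧
  ∀ s : Finset ι, s.card ≤ k → ∀ σ : ι → ℝ, (∀ i, σ i = 1 ∨ σ i = -1) →
    μ {ω | ∀ i ∈ s, ε i ω = σ i} = (2 : ℝ≥0∞)⁻¹ ^ s.card

/-- The optimal constant in the classical Khintchine inequality with (even) exponent `k`;
for even `k` one has `C(k)^k = (k-1)!! = k! / (2^(k/2) (k/2)!)`. -/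
def khintchineConst (k : ℕ) : ℝ :=
  ((Nat.factorial k : ℝ) / (2 ^ (k / 2) * Nat.factorial (k / 2))) ^ ((k : ℝ)⁻¹)

section Aux
open Finset

lemma integral_prod_rademacher {Ω : Type*} [MeasurableSpace Ω] (μ : Measure Ω)
    [IsProbabilityMeasure μ] {N : ℕ} {k : ℕ} (ε : Fin N → Ω → ℝ)
    (hmeas : ∀ i, Measurable (ε i))
    (hprob : ∀ s : Finset (Fin N), s.card ≤ k → ∀ σ : Fin N → ℝ,
      (∀ i, σ i = 1 ∨ σ i = -1) → μ {ω | ∀ i ∈ s, ε i ω = σ i} = (2 : ℝ≥0∞)⁻¹ ^ s.card)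
    (hae : ∀ᵐ ω ∂μ, ∀ i, ε i ω = 1 ∨ ε i ω = -1)
    (t : Finset (Fin N)) (ht : t.card ≤ k) :
    ∫ ω, ∏ i ∈ t, ε i ω ∂μ = if t = ∅ then 1 else 0 := by
  classical
  set σu : Finset (Fin N) → Fin N → ℝ := fun u i => if i ∈ u then 1 else -1 with hσu
  have hσpm : ∀ u i, σu u i = 1 ∨ σu u i = -1 := by
    intro u i; by_cases h : i ∈ u <;> simp [σu, h]
  set A : Finset (Fin N) → Set Ω := fun u => {ω | ∀ i ∈ t, ε i ω = σu u i} with hA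
  have hAmeas : ∀ u, MeasurableSet (A u) := by
    intro u
    have : A u = ⋂ i ∈ (t : Set (Fin N)), ε i ⁻¹' {σu u i} := by
      ext ω; simp [A, Set.mem_iInter]
    rw [this]
    exact MeasurableSet.biInter (t : Set (Fin N)).to_countable
      (fun i _ => hmeas i (measurableSet_singleton _))
  have hAmu : ∀ u, μ (A u) = (2 : ℝ≥0∞)⁻¹ ^ t.card := fun u => hprob t ht (σu u) (hσpm u)
  -- a.e. identification with a simple function
  have key : (fun ω => ∏ i ∈ t, ε i ω) =ᵐ[μ]
      (fun ω => ∑ u ∈ t.powerset, (A u).indicator (fun _ => ∏ i ∈ t, σu u i) ω) := by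
    filter_upwards [hae] with ω hω
    set u := t.filter (fun i => ε i ω = 1) with hu
    have hut : u ∈ t.powerset := mem_powerset.2 (filter_subset _ _)
    have hmem : ω ∈ A u := by
      intro i hi
      rcases hω i with h1 | h1
      · simp [σu, hu, mem_filter, hi, h1]
      · have : i ∉ u := by
          simp only [hu, mem_filter]
          rintro ⟨-, h2⟩; rw [h1] at h2; norm_num at h2
        simp [σu, this, h1]
    rw [Finset.sum_eq_single_of_mem u hut]
    · rw [Set.indicator_of_mem hmem]
      exact Finset.prod_congr rfl (fun i hi => hmem i hi)
    · intro v hv hvu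
      rw [Set.indicator_of_notMem]
      intro hmemv
      apply hvu
      ext i
      simp only [hu, mem_filter]
      constructor
      · intro hiv
        have hit : i ∈ t := mem_powerset.1 hv hiv
        refine ⟨hit, ?_⟩
        have := hmemv i hit
        simpa [σu, hiv] using this
      · rintro ⟨hit, h1⟩
        by_contra hiv
        have := hmemv i hit
        rw [h1] at this
        simp [σu, hiv] at this
        norm_num at this
  rw [integral_congr_ae key, integral_finset_sum _
    (fun u _ => (integrable_const _).indicator (hAmeas u))]
  have : ∀ u ∈ t.powerset,
      (∫ ω, (A u).indicator (fun _ => ∏ i ∈ t, σu u i) ω ∂μ)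
        = ((1:ℝ)/2) ^ t.card * (-1 : ℝ) ^ (t \ u).card := by
    intro u hu
    rw [integral_indicator_const _ (hAmeas u), measureReal_def, hAmu u]
    have h1 : ((2 : ℝ≥0∞)⁻¹ ^ t.card).toReal = ((1:ℝ)/2) ^ t.card := by
      simp [ENNReal.toReal_pow]
    have h2 : ∏ i ∈ t, σu u i = (-1 : ℝ) ^ (t \ u).card := by
      have hsub : u ⊆ t := mem_powerset.1 hu
      rw [← Finset.prod_sdiff hsub]
      have ha : ∏ i ∈ u, σu u i = 1 := Finset.prod_eq_one (fun i hi => by simp [σu, hi])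
      have hb : ∏ i ∈ t \ u, σu u i = (-1 : ℝ) ^ (t \ u).card := by
        rw [Finset.prod_congr rfl (fun i hi => by
          simp [σu, (Finset.mem_sdiff.1 hi).2] : ∀ i ∈ t \ u, σu u i = -1), Finset.prod_const]
      rw [ha, hb, mul_one]
    rw [h1, h2, smul_eq_mul]
  rw [Finset.sum_congr rfl this, ← Finset.mul_sum]
  have hsum : ∑ u ∈ t.powerset, (-1 : ℝ) ^ (t \ u).card
      = ∑ v ∈ t.powerset, (-1 : ℝ) ^ v.card := by
    refine Finset.sum_nbij' (fun u => t \ u) (fun v => t \ v) ?_ ?_ ?_ ?_ ?_ <;>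
      simp +contextual [Finset.sdiff_sdiff_eq_self, mem_powerset, Finset.sdiff_subset]
  rw [hsum]
  have h0 : ∑ v ∈ t.powerset, (-1 : ℝ) ^ v.card = if t = ∅ then 1 else 0 := by
    have := Finset.sum_powerset_neg_one_pow_card (x := t)
    have h := congrArg (fun z : ℤ => (z : ℝ)) this
    push_cast at h
    exact h
  rw [h0]
  split
  · next h => subst h; simp
  · simp

lemma rademacher_ae_pm {Ω : Type*} [MeasurableSpace Ω] (μ : Measure Ω)
    [IsProbabilityMeasure μ] {N k : ℕ} (hk : 1 ≤ k) (ε : Fin N → Ω → ℝ)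
    (hmeas : ∀ i, Measurable (ε i))
    (hprob : ∀ s : Finset (Fin N), s.card ≤ k → ∀ σ : Fin N → ℝ,
      (∀ i, σ i = 1 ∨ σ i = -1) → μ {ω | ∀ i ∈ s, ε i ω = σ i} = (2 : ℝ≥0∞)⁻¹ ^ s.card) :
    ∀ᵐ ω ∂μ, ∀ i, ε i ω = 1 ∨ ε i ω = -1 := by
  rw [ae_all_iff]
  intro i
  have h1 := hprob {i} (by simpa using hk) (fun _ => 1) (fun _ => Or.inl rfl)
  have h2 := hprob {i} (by simpa using hk) (fun _ => -1) (fun _ => Or.inr rfl)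
  have e1 : {ω | ∀ j ∈ ({i} : Finset (Fin N)), ε j ω = (1:ℝ)} = ε i ⁻¹' {1} := by
    ext ω; simp
  have e2 : {ω | ∀ j ∈ ({i} : Finset (Fin N)), ε j ω = (-1:ℝ)} = ε i ⁻¹' {-1} := by
    ext ω; simp
  rw [e1, Finset.card_singleton, pow_one] at h1
  rw [e2, Finset.card_singleton, pow_one] at h2
  have hA : MeasurableSet (ε i ⁻¹' {1}) := hmeas i (measurableSet_singleton _)
  have hB : MeasurableSet (ε i ⁻¹' {-1}) := hmeas i (measurableSet_singleton _)
  have hdisj : Disjoint (ε i ⁻¹' {1}) (ε i ⁻¹' {-1}) := by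
    apply Set.disjoint_left.2
    intro ω hω1 hω2
    simp only [Set.mem_preimage, Set.mem_singleton_iff] at hω1 hω2
    rw [hω1] at hω2; norm_num at hω2
  have hunion : μ (ε i ⁻¹' {1} ∪ ε i ⁻¹' {-1}) = 1 := by
    rw [measure_union hdisj hB, h1, h2, ENNReal.inv_two_add_inv_two]
  have hc : μ ((ε i ⁻¹' {1} ∪ ε i ⁻¹' {-1})ᶜ) = 0 := by
    rw [prob_compl_eq_zero_iff (hA.union hB)]
    exact hunion
  rw [ae_iff]
  have heq : {ω | ¬(ε i ω = 1 ∨ ε i ω = -1)} = (ε i ⁻¹' {1} ∪ ε i ⁻¹' {-1})ᶜ := by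
    ext ω; simp [not_or]
  rw [heq]; exact hc

lemma integral_moment_eq {Ω : Type*} [MeasurableSpace Ω] (μ : Measure Ω)
    [IsProbabilityMeasure μ] {N k : ℕ} (ε : Fin N → Ω → ℝ)
    (hmeas : ∀ i, Measurable (ε i))
    (hprob : ∀ s : Finset (Fin N), s.card ≤ k → ∀ σ : Fin N → ℝ,
      (∀ i, σ i = 1 ∨ σ i = -1) → μ {ω | ∀ i ∈ s, ε i ω = σ i} = (2 : ℝ≥0∞)⁻¹ ^ s.card)
    (hae : ∀ᵐ ω ∂μ, ∀ i, ε i ω = 1 ∨ ε i ω = -1) (a : Fin N → ℝ) :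
    ∫ ω, (∑ i, a i * ε i ω) ^ k ∂μ
      = ∑ m ∈ (Finset.piAntidiag Finset.univ k).filter (fun m => ∀ i, 2 ∣ m i),
          (Nat.multinomial Finset.univ m : ℝ) * ∏ i, a i ^ m i := by
  classical
  have hrw : ∀ ω, (∑ i, a i * ε i ω) ^ k
      = ∑ m ∈ Finset.piAntidiag Finset.univ k,
          (Nat.multinomial Finset.univ m : ℝ) * ∏ i, (a i * ε i ω) ^ m i := fun ω =>
    Finset.sum_pow_eq_sum_piAntidiag Finset.univ _ k
  simp only [hrw]
  have hint : ∀ m : Fin N → ℕ, Integrable (fun ω => ∏ i, (a i * ε i ω) ^ m i) μ := by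
    intro m
    have hm : Measurable fun ω => ∏ i, (a i * ε i ω) ^ m i :=
      Finset.measurable_prod _ (fun i _ => ((measurable_const.mul (hmeas i)).pow_const (m i)))
    refine Integrable.mono' (integrable_const (∏ i, |a i| ^ m i)) hm.aestronglyMeasurable ?_
    filter_upwards [hae] with ω hω
    rw [Real.norm_eq_abs, Finset.abs_prod]
    apply le_of_eq
    refine Finset.prod_congr rfl (fun i _ => ?_)
    rw [abs_pow, abs_mul]
    rcases hω i with h | h <;> rw [h] <;> norm_num
  rw [integral_finset_sum _ (fun m _ => ((hint m).const_mul _))]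
  have hterm : ∀ m ∈ Finset.piAntidiag (Finset.univ : Finset (Fin N)) k,
      ∫ ω, (Nat.multinomial Finset.univ m : ℝ) * ∏ i, (a i * ε i ω) ^ m i ∂μ
        = ((Nat.multinomial Finset.univ m : ℝ) * ∏ i, a i ^ m i)
            * (if (∀ i, 2 ∣ m i) then (1:ℝ) else 0) := by
    intro m hm
    rw [Finset.mem_piAntidiag] at hm
    rw [MeasureTheory.integral_const_mul]
    have hsplit : ∀ ω, ∏ i, (a i * ε i ω) ^ m i
        = (∏ i, a i ^ m i) * ∏ i, ε i ω ^ m i := by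
      intro ω
      rw [← Finset.prod_mul_distrib]
      exact Finset.prod_congr rfl (fun i _ => mul_pow _ _ _)
    simp only [hsplit]
    rw [MeasureTheory.integral_const_mul]
    set t : Finset (Fin N) := Finset.univ.filter (fun i => ¬ 2 ∣ m i) with hts
    have haeprod : (fun ω => ∏ i, ε i ω ^ m i) =ᵐ[μ] (fun ω => ∏ i ∈ t, ε i ω) := by
      filter_upwards [hae] with ω hω
      rw [hts, Finset.prod_filter]
      refine Finset.prod_congr rfl (fun i _ => ?_)
      rcases hω i with h | h <;> rw [h]
      · simp
      · by_cases h2 : 2 ∣ m i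
        · have : Even (m i) := (even_iff_two_dvd).2 h2
          simp [h2, this.neg_one_pow]
        · have : Odd (m i) := Nat.odd_iff.2 (Nat.two_dvd_ne_zero.1 h2)
          simp [h2, this.neg_one_pow]
    have htcard : t.card ≤ k := by
      calc t.card = ∑ i ∈ t, 1 := by rw [Finset.card_eq_sum_ones]
        _ ≤ ∑ i ∈ t, m i := Finset.sum_le_sum (fun i hi => by
            have := (Finset.mem_filter.1 hi).2
            omega)
        _ ≤ ∑ i, m i := Finset.sum_le_sum_of_subset (Finset.filter_subset _ _)
        _ = k := hm.1
    rw [integral_congr_ae haeprod,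
      integral_prod_rademacher μ ε hmeas hprob hae t htcard]
    rw [mul_assoc]
    congr 1
    by_cases hall : ∀ i, 2 ∣ m i
    · have : t = ∅ := by
        rw [hts, Finset.filter_eq_empty_iff]
        intro i _; exact not_not.2 (hall i)
      simp [this, hall]
    · have : t ≠ ∅ := by
        rw [hts, Ne, Finset.filter_eq_empty_iff]
        push_neg
        push_neg at hall
        obtain ⟨i, hi⟩ := hall
        exact ⟨i, Finset.mem_univ i, hi⟩
      simp [this, hall]
  rw [Finset.sum_congr rfl hterm, Finset.sum_filter]
  exact Finset.sum_congr rfl (fun m _ => mul_boole _ _)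

lemma multinomial_double_le {N r : ℕ} (n : Fin N → ℕ) (hn : ∑ i, n i = r) :
    (Nat.multinomial Finset.univ (fun i => 2 * n i) : ℝ)
      ≤ ((2 * r).factorial : ℝ) / (2 ^ r * r.factorial)
          * (Nat.multinomial Finset.univ n) := by
  have spec1 : (∏ i, (2 * n i).factorial) * Nat.multinomial Finset.univ (fun i => 2 * n i)
      = (2 * r).factorial := by
    have := Nat.multinomial_spec Finset.univ (fun i => 2 * n i)
    rwa [← Finset.mul_sum, hn] at this
  have spec2 : (∏ i, (n i).factorial) * Nat.multinomial Finset.univ n = r.factorial := by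
    have := Nat.multinomial_spec Finset.univ n
    rwa [hn] at this
  have key : 2 ^ r * ∏ i, (n i).factorial ≤ ∏ i, (2 * n i).factorial := by
    calc 2 ^ r * ∏ i, (n i).factorial = ∏ i, 2 ^ n i * (n i).factorial := by
          rw [Finset.prod_mul_distrib, Finset.prod_pow_eq_pow_sum, hn]
      _ ≤ ∏ i, (2 * n i).factorial := Finset.prod_le_prod' (fun i _ => by
          rw [← Nat.doubleFactorial_two_mul]
          exact Nat.doubleFactorial_le_factorial _)
  have hP : (0:ℝ) < ∏ i, ((2 * n i).factorial : ℝ) :=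
    Finset.prod_pos (fun i _ => by exact_mod_cast Nat.factorial_pos _)
  have hQ : (0:ℝ) < ∏ i, ((n i).factorial : ℝ) :=
    Finset.prod_pos (fun i _ => by exact_mod_cast Nat.factorial_pos _)
  have c1 : (∏ i, ((2 * n i).factorial : ℝ)) * (Nat.multinomial Finset.univ (fun i => 2 * n i) : ℝ)
      = ((2 * r).factorial : ℝ) := by exact_mod_cast congrArg (Nat.cast (R := ℝ)) spec1
  have c2 : (∏ i, ((n i).factorial : ℝ)) * (Nat.multinomial Finset.univ n : ℝ)
      = (r.factorial : ℝ) := by exact_mod_cast congrArg (Nat.cast (R := ℝ)) spec2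
  have keyR : (2:ℝ) ^ r * ∏ i, ((n i).factorial : ℝ) ≤ ∏ i, ((2 * n i).factorial : ℝ) := by
    exact_mod_cast key
  have e1 : (Nat.multinomial Finset.univ (fun i => 2 * n i) : ℝ)
      = ((2 * r).factorial : ℝ) / ∏ i, ((2 * n i).factorial : ℝ) :=
    (eq_div_iff hP.ne').2 (by linarith [c1])
  have e2 : (Nat.multinomial Finset.univ n : ℝ)
      = (r.factorial : ℝ) / ∏ i, ((n i).factorial : ℝ) :=
    (eq_div_iff hQ.ne').2 (by linarith [c2])
  rw [e1, e2, div_mul_div_comm, div_le_div_iff₀ hP (by positivity)]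
  have hfac : (0:ℝ) < ((2*r).factorial : ℝ) := by exact_mod_cast Nat.factorial_pos _
  have hfac2 : (0:ℝ) < (r.factorial : ℝ) := by exact_mod_cast Nat.factorial_pos _
  calc ((2*r).factorial : ℝ) * (2 ^ r * r.factorial * ∏ i, ((n i).factorial : ℝ))
      = ((2*r).factorial : ℝ) * (r.factorial : ℝ) * (2 ^ r * ∏ i, ((n i).factorial : ℝ)) := by
        ring
    _ ≤ ((2*r).factorial : ℝ) * (r.factorial : ℝ) * ∏ i, ((2 * n i).factorial : ℝ) := by
        have : (0:ℝ) ≤ ((2*r).factorial : ℝ) * (r.factorial : ℝ) := by positivity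
        exact mul_le_mul_of_nonneg_left keyR this

lemma even_multinomial_sum_le {N : ℕ} (r : ℕ) (hr : r ≠ 0) (a : Fin N → ℝ) :
    ∑ m ∈ (Finset.piAntidiag Finset.univ (2 * r)).filter (fun m => ∀ i, 2 ∣ m i),
        (Nat.multinomial Finset.univ m : ℝ) * ∏ i, a i ^ m i
      ≤ ((2 * r).factorial : ℝ) / (2 ^ r * r.factorial) * (∑ i, a i ^ 2) ^ r := by
  classical
  have hset : (Finset.piAntidiag (Finset.univ : Finset (Fin N)) (2 * r)).filter
        (fun m => ∀ i, 2 ∣ m i)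
      = (Finset.piAntidiag (Finset.univ : Finset (Fin N)) r).map
          ⟨((2:ℕ) • ·), fun _ _ h => funext fun i =>
            mul_right_injective₀ two_ne_zero (congrFun h i)⟩ := by
    rw [Finset.map_nsmul_piAntidiag_univ (n := 2) r two_ne_zero]
    congr
  rw [hset, Finset.sum_map]
  have hterm : ∀ n ∈ Finset.piAntidiag (Finset.univ : Finset (Fin N)) r,
      (Nat.multinomial Finset.univ ((2:ℕ) • n) : ℝ) * ∏ i, a i ^ ((2:ℕ) • n) i
        ≤ ((2 * r).factorial : ℝ) / (2 ^ r * r.factorial)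
            * ((Nat.multinomial Finset.univ n : ℝ) * ∏ i, (a i ^ 2) ^ n i) := by
    intro n hn
    rw [Finset.mem_piAntidiag] at hn
    have hsmul : ((2:ℕ) • n) = fun i => 2 * n i := by
      funext i; simp [smul_eq_mul]
    rw [hsmul]
    have hprod : ∏ i, a i ^ (2 * n i) = ∏ i, (a i ^ 2) ^ n i :=
      Finset.prod_congr rfl (fun i _ => by rw [pow_mul])
    rw [hprod, ← mul_assoc]
    have hpnonneg : (0:ℝ) ≤ ∏ i, (a i ^ 2) ^ n i :=
      Finset.prod_nonneg (fun i _ => by positivity)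
    exact mul_le_mul_of_nonneg_right (multinomial_double_le n hn.1) hpnonneg
  calc ∑ n ∈ Finset.piAntidiag (Finset.univ : Finset (Fin N)) r,
        (Nat.multinomial Finset.univ ((2:ℕ) • n) : ℝ) * ∏ i, a i ^ ((2:ℕ) • n) i
      ≤ ∑ n ∈ Finset.piAntidiag (Finset.univ : Finset (Fin N)) r,
        ((2 * r).factorial : ℝ) / (2 ^ r * r.factorial)
            * ((Nat.multinomial Finset.univ n : ℝ) * ∏ i, (a i ^ 2) ^ n i) :=
      Finset.sum_le_sum hterm
    _ = ((2 * r).factorial : ℝ) / (2 ^ r * r.factorial) * (∑ i, a i ^ 2) ^ r := by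
      rw [← Finset.mul_sum, Finset.sum_pow_eq_sum_piAntidiag]

theorem khintchine_kwise_upper_bound' {Ω : Type*} [MeasurableSpace Ω]
    (μ : Measure Ω) [IsProbabilityMeasure μ] {N : ℕ} (k : ℕ) (hk2 : 2 ≤ k) (hke : Even k)
    (p : ℝ) (hpk : (k : ℝ) ≤ p) (ε : Fin N → Ω → ℝ)
    (hε : (∀ i, Measurable (ε i)) ∧
      ∀ s : Finset (Fin N), s.card ≤ k → ∀ σ : Fin N → ℝ, (∀ i, σ i = 1 ∨ σ i = -1) →
        μ {ω | ∀ i ∈ s, ε i ω = σ i} = (2 : ℝ≥0∞)⁻¹ ^ s.card)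
    (a : Fin N → ℝ) :
    (∫ ω, |∑ i, a i * ε i ω| ^ p ∂μ) ^ (1 / p) ≤
      (((Nat.factorial k : ℝ) / (2 ^ (k / 2) * Nat.factorial (k / 2))) ^ ((k : ℝ)⁻¹)) ^ ((k : ℝ) / p)
        * (N : ℝ) ^ ((1 : ℝ) / 2 - (k : ℝ) / (2 * p)) * Real.sqrt (∑ i, (a i) ^ 2) := by
  classical
  obtain ⟨hmeas, hprob⟩ := hε
  have hk1 : 1 ≤ k := le_trans one_le_two hk2
  have hae := rademacher_ae_pm μ hk1 ε hmeas hprob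
  obtain ⟨c, hc⟩ := hke
  have hkr : k = 2 * (k / 2) := by omega
  have hr0 : k / 2 ≠ 0 := by omega
  have hp0 : (0:ℝ) < p := lt_of_lt_of_le (by exact_mod_cast Nat.pos_of_ne_zero (by omega)) hpk
  set S : Ω → ℝ := fun ω => ∑ i, a i * ε i ω with hS
  set A : ℝ := ∑ i, a i ^ 2 with hA
  set D : ℝ := (Nat.factorial k : ℝ) / (2 ^ (k / 2) * Nat.factorial (k / 2)) with hD
  have hDpos : 0 < D := by
    apply div_pos
    · exact_mod_cast Nat.factorial_pos k
    · apply _root_.mul_pos (by positivity : (0:ℝ) < 2 ^ (k/2))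
      exact_mod_cast Nat.factorial_pos (k / 2)
  by_cases hA0 : A = 0
  · have hzero : ∀ i, a i = 0 := by
      intro i
      have hsum : ∑ j, a j ^ 2 = 0 := by rw [← hA]; exact hA0
      have := (Finset.sum_eq_zero_iff_of_nonneg
        (fun j _ => sq_nonneg (a j))).1 hsum i (Finset.mem_univ i)
      exact (pow_eq_zero_iff two_ne_zero).1 this
    have hSz : ∀ ω, S ω = 0 := fun ω => Finset.sum_eq_zero (fun i _ => by rw [hzero i, zero_mul])
    have : (∫ ω, |S ω| ^ p ∂μ) = 0 := by
      simp only [hSz, abs_zero]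
      rw [Real.zero_rpow hp0.ne', integral_zero]
    rw [this, Real.zero_rpow (by positivity : (1:ℝ)/p ≠ 0)]
    have h1 : (0:ℝ) ≤ (D ^ ((k : ℝ)⁻¹)) ^ ((k : ℝ) / p) := by positivity
    have h2 : (0:ℝ) ≤ (N : ℝ) ^ ((1 : ℝ) / 2 - (k : ℝ) / (2 * p)) := by positivity
    positivity
  · have hApos : 0 < A := lt_of_le_of_ne (Finset.sum_nonneg (fun i _ => sq_nonneg _)) (Ne.symm hA0)
    have hNpos : (0:ℝ) < N := by
      rcases Nat.eq_zero_or_pos N with h | h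
      · exfalso; apply hA0; rw [hA]; subst h; simp
      · exact_mod_cast h
    set B : ℝ := Real.sqrt ((N : ℝ) * A) with hB
    have hBpos : 0 < B := Real.sqrt_pos.2 (by positivity)
    -- pointwise bound |S| ≤ B
    have hSb : ∀ᵐ ω ∂μ, |S ω| ≤ B := by
      filter_upwards [hae] with ω hω
      have h1 : (S ω) ^ 2 ≤ A * ∑ i, (ε i ω) ^ 2 :=
        Finset.sum_mul_sq_le_sq_mul_sq Finset.univ a (fun i => ε i ω)
      have h2 : ∑ i, (ε i ω) ^ 2 = (N : ℝ) := by
        rw [Finset.sum_congr rfl (fun i _ => by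
          rcases hω i with h | h <;> rw [h] <;> norm_num : ∀ i ∈ Finset.univ, (ε i ω)^2 = 1)]
        simp
      rw [← Real.sqrt_sq_eq_abs, hB]
      apply Real.sqrt_le_sqrt
      rw [h2] at h1
      linarith
    -- integrability of S^k
    have hSmeas : Measurable S :=
      Finset.measurable_sum _ (fun i _ => measurable_const.mul (hmeas i))
    have hintSk : Integrable (fun ω => (S ω) ^ k) μ := by
      refine Integrable.mono' (integrable_const (B ^ k))
        ((hSmeas.pow_const k).aestronglyMeasurable) ?_
      filter_upwards [hSb] with ω hω
      rw [Real.norm_eq_abs, abs_pow]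
      exact pow_le_pow_left₀ (abs_nonneg _) hω k
    -- moment bound
    have hmom : ∫ ω, (S ω) ^ k ∂μ ≤ D * A ^ (k / 2) := by
      rw [hS]
      rw [integral_moment_eq μ ε hmeas hprob hae a]
      have h := even_multinomial_sum_le (k / 2) hr0 a
      rw [← hkr] at h
      exact h
    -- interpolation
    have hmono : ∫ ω, |S ω| ^ p ∂μ ≤ (D * A ^ (k / 2)) * B ^ (p - (k:ℝ)) := by
      have step1 : ∫ ω, |S ω| ^ p ∂μ ≤ ∫ ω, (S ω) ^ k * B ^ (p - (k:ℝ)) ∂μ := by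
        apply integral_mono_of_nonneg
        · filter_upwards with ω; exact Real.rpow_nonneg (abs_nonneg _) p
        · exact hintSk.mul_const _
        · filter_upwards [hSb] with ω hω
          have habs : |S ω| ^ p = |S ω| ^ (k:ℝ) * |S ω| ^ (p - (k:ℝ)) := by
            rw [← Real.rpow_add_of_nonneg (abs_nonneg _) (by positivity)
              (sub_nonneg.2 hpk)]
            congr 1; ring
          rw [habs, Real.rpow_natCast, (Even.pow_abs ⟨c, hc⟩ _)]
          apply mul_le_mul_of_nonneg_left _ (by rw [← Even.pow_abs ⟨c, hc⟩]; positivity)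
          exact Real.rpow_le_rpow (abs_nonneg _) hω (sub_nonneg.2 hpk)
      have step2 : ∫ ω, (S ω) ^ k * B ^ (p - (k:ℝ)) ∂μ
          = (∫ ω, (S ω) ^ k ∂μ) * B ^ (p - (k:ℝ)) := integral_mul_const _ _
      rw [step2] at step1
      refine le_trans step1 ?_
      exact mul_le_mul_of_nonneg_right hmom (Real.rpow_nonneg hBpos.le _)
    have hLHSnn : 0 ≤ ∫ ω, |S ω| ^ p ∂μ :=
      integral_nonneg (fun ω => Real.rpow_nonneg (abs_nonneg _) p)
    set RHS : ℝ := (D ^ ((k : ℝ)⁻¹)) ^ ((k : ℝ) / p) * (N : ℝ) ^ ((1 : ℝ) / 2 - (k : ℝ) / (2 * p))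
        * Real.sqrt A with hRHS
    have hRHSpos : 0 < RHS := by
      apply _root_.mul_pos (_root_.mul_pos _ _) (Real.sqrt_pos.2 hApos)
      · exact Real.rpow_pos_of_pos (Real.rpow_pos_of_pos hDpos _) _
      · exact Real.rpow_pos_of_pos hNpos _
    have hkey : (D * A ^ (k / 2)) * B ^ (p - (k:ℝ)) = RHS ^ p := by
      have hk0 : (k:ℝ) ≠ 0 := by positivity
      have hkhalf : ((k / 2 : ℕ) : ℝ) = (k : ℝ) / 2 := by
        have h2 : k / 2 = c := by omega
        rw [h2, hc]; push_cast; ring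
      have hBrw : B ^ (p - (k:ℝ)) = (N:ℝ) ^ ((p - (k:ℝ))/2) * A ^ ((p - (k:ℝ))/2) := by
        rw [hB, Real.sqrt_eq_rpow, ← Real.rpow_mul (by positivity : (0:ℝ) ≤ (N:ℝ) * A),
          show (1:ℝ)/2 * (p - (k:ℝ)) = (p - (k:ℝ))/2 by ring,
          Real.mul_rpow hNpos.le hApos.le]
      have hAr : (A : ℝ) ^ (k / 2 : ℕ) = A ^ ((k:ℝ)/2) := by
        rw [← Real.rpow_natCast A (k / 2), hkhalf]
      have e1 : (k:ℝ)⁻¹ * ((k:ℝ)/p * p) = 1 := by field_simp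
      have e2 : ((1:ℝ)/2 - (k:ℝ)/(2*p)) * p = (p - (k:ℝ))/2 := by field_simp
      have e3 : (1:ℝ)/2 * p = p/2 := by ring
      have hRHSp : RHS ^ p = D * (N:ℝ) ^ ((p - (k:ℝ))/2) * A ^ (p/2) := by
        rw [hRHS, Real.mul_rpow (by positivity) (Real.sqrt_nonneg _),
          Real.mul_rpow (by positivity) (by positivity),
          ← Real.rpow_mul (Real.rpow_nonneg hDpos.le _), ← Real.rpow_mul hDpos.le,
          ← Real.rpow_mul hNpos.le, Real.sqrt_eq_rpow, ← Real.rpow_mul hApos.le,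
          e1, e2, e3, Real.rpow_one]
      have hAA : A ^ ((k:ℝ)/2) * A ^ ((p - (k:ℝ))/2) = A ^ (p/2) := by
        rw [← Real.rpow_add hApos]; congr 1; ring
      rw [hAr, hBrw, hRHSp, ← hAA]; ring
    have hfin : (RHS ^ p) ^ ((1:ℝ)/p) = RHS := by
      rw [← Real.rpow_mul hRHSpos.le, mul_one_div, div_self hp0.ne', Real.rpow_one]
    calc (∫ ω, |S ω| ^ p ∂μ) ^ ((1:ℝ)/p) ≤ (RHS ^ p) ^ ((1:ℝ)/p) :=
        Real.rpow_le_rpow hLHSnn (hkey ▸ hmono) (by positivity)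
      _ = RHS := hfin

end Aux

/-- interpolation bound `C(N,p,k) ≤ C(k)^{k/p} N^{1/2 - k/(2p)}` for even `k`,
`p ≥ k ≥ 2`, applied to any `k`-wise independent Rademacher vector and any `a ∈ ℝ^N`. -/
theorem khintchine_kwise_upper_bound {Ω : Type*} [MeasurableSpace Ω]
    (μ : Measure Ω) [IsProbabilityMeasure μ] {N : ℕ} (k : ℕ) (hk2 : 2 ≤ k) (hke : Even k)
    (p : ℝ) (hpk : (k : ℝ) ≤ p) (ε : Fin N → Ω → ℝ) (hε : IsKWiseRademacher μ k ε)
    (a : Fin N → ℝ) :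
    (∫ ω, |∑ i, a i * ε i ω| ^ p ∂μ) ^ (1 / p) ≤
      khintchineConst k ^ ((k : ℝ) / p) * (N : ℝ) ^ ((1 : ℝ) / 2 - (k : ℝ) / (2 * p)) *
        Real.sqrt (∑ i, (a i) ^ 2) := by
  exact khintchine_kwise_upper_bound' μ k hk2 hke p hpk ε hε a
end
end

section
/- Suppose N is even, p > 2, ε' is a pairwise independent Rademacher vector, a' ∈ ℝ^N with ‖a'‖₂ = 1, and (E|∑ᵢ a'ᵢε'ᵢ|^p)^{1/p} = N^{1/2−1/p}. Then all |a'ᵢ| are equal (to 1/√N), and almost surely either ε'ᵢ = sgn(a'ᵢ) for all i, or ε'ᵢ = −sgn(a'ᵢ) for all i, or ε'ᵢ = sgn(a'ᵢ) for exactly half of the indices i. -/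
open MeasureTheory ENNReal

noncomputable section

private lemma aux_cs_eq {N : ℕ} (b : Fin N → ℝ)
    (h : (∑ i, b i) ^ 2 = (N : ℝ) * ∑ i, (b i) ^ 2) : ∀ i j, b i = b j := by
  have key : ∑ i, ∑ j, (b i - b j) ^ 2 = 0 := by
    have step : ∀ i : Fin N, ∑ j, (b i - b j) ^ 2
        = (N : ℝ) * b i ^ 2 - 2 * (b i * ∑ j, b j) + ∑ j, b j ^ 2 := by
      intro i
      have : ∀ j : Fin N, (b i - b j) ^ 2 = b i ^ 2 - 2 * (b i * b j) + b j ^ 2 := by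
        intro j; ring
      simp only [this, Finset.sum_add_distrib, Finset.sum_sub_distrib, ← Finset.mul_sum,
        Finset.sum_const, Finset.card_univ, Fintype.card_fin, nsmul_eq_mul]
    calc ∑ i, ∑ j, (b i - b j) ^ 2
        = ∑ i : Fin N, ((N : ℝ) * b i ^ 2 - 2 * (b i * ∑ j, b j) + ∑ j, b j ^ 2) :=
          Finset.sum_congr rfl fun i _ => step i
      _ = (N : ℝ) * ∑ i, b i ^ 2 - 2 * (∑ i, b i) ^ 2 + (N : ℝ) * ∑ i, b i ^ 2 := by
          simp only [Finset.sum_add_distrib, Finset.sum_sub_distrib, ← Finset.mul_sum,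
            Finset.sum_const, Finset.card_univ, Fintype.card_fin, nsmul_eq_mul,
            ← Finset.sum_mul]
          ring
      _ = 0 := by rw [← h]; ring
  intro i j
  have h1 : ∀ i ∈ Finset.univ, (0:ℝ) ≤ ∑ j, (b i - b j) ^ 2 :=
    fun i _ => Finset.sum_nonneg fun j _ => sq_nonneg _
  have h2 := (Finset.sum_eq_zero_iff_of_nonneg h1).1 key i (Finset.mem_univ i)
  have h3 := (Finset.sum_eq_zero_iff_of_nonneg (fun j _ => sq_nonneg _)).1 h2 j (Finset.mem_univ j)
  have h4 : b i - b j = 0 := sq_eq_zero_iff.1 h3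
  linarith

open scoped Classical in
private lemma aux_signsum {N : ℕ} (c : Fin N → ℝ) (hc : ∀ i, c i = 1 ∨ c i = -1) :
    ∑ i, c i = 2 * ((Finset.univ.filter (fun i => c i = 1)).card : ℝ) - N := by
  rw [← Finset.sum_filter_add_sum_filter_not Finset.univ (fun i => c i = 1)]
  have h1 : ∑ i ∈ Finset.univ.filter (fun i => c i = 1), c i
      = ((Finset.univ.filter (fun i => c i = 1)).card : ℝ) := by
    rw [Finset.sum_congr rfl (fun i hi => (Finset.mem_filter.1 hi).2)]
    simp
  have h2 : ∑ i ∈ Finset.univ.filter (fun i => ¬ c i = 1), c i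
      = -((Finset.univ.filter (fun i => ¬ c i = 1)).card : ℝ) := by
    rw [Finset.sum_congr rfl (fun i hi => (hc i).resolve_left (Finset.mem_filter.1 hi).2)]
    simp
  have h3 : (Finset.univ.filter (fun i => c i = 1)).card
      + (Finset.univ.filter (fun i => ¬ c i = 1)).card = N := by
    rw [Finset.card_filter_add_card_filter_not]
    simp
  have h4 := congrArg (Nat.cast : ℕ → ℝ) h3
  push_cast at h4
  rw [h1, h2]
  linarith

open scoped Classical in
/-- equality case. If a pairwise independent Rademacher vector `ε'` and a unit
vector `a'` achieve `(E|∑ a'ᵢε'ᵢ|^p)^{1/p} = N^{1/2-1/p}` with `N` even and `p > 2`, then all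
`|a'ᵢ|` equal `1/√N`, and almost surely either `ε'ᵢ = sgn(a'ᵢ)` for all `i`, or
`ε'ᵢ = −sgn(a'ᵢ)` for all `i`, or `ε'ᵢ = sgn(a'ᵢ)` for exactly half of the indices. -/
theorem equality_case_structure {Ω : Type*} [MeasurableSpace Ω]
    (μ : Measure Ω) [IsProbabilityMeasure μ] {N : ℕ} (hNe : Even N) (p : ℝ) (hp : 2 < p)
    (ε' : Fin N → Ω → ℝ) (hε : IsKWiseRademacher μ 2 ε')
    (a' : Fin N → ℝ) (ha : ∑ i, (a' i) ^ 2 = 1)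
    (heq : (∫ ω, |∑ i, a' i * ε' i ω| ^ p ∂μ) ^ (1 / p) =
      (N : ℝ) ^ ((1 : ℝ) / 2 - 1 / p)) :
    (∀ i, |a' i| = (Real.sqrt N)⁻¹) ∧
    (∀ᵐ ω ∂μ, (∀ i, ε' i ω = Real.sign (a' i)) ∨ (∀ i, ε' i ω = -Real.sign (a' i)) ∨
      2 * (Finset.univ.filter (fun i => ε' i ω = Real.sign (a' i))).card = N) := by
  classical
  obtain ⟨hmeas, hprob⟩ := hε
  have hN0 : 0 < N := by
    rcases Nat.eq_zero_or_pos N with h | h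
    · subst h; simp at ha
    · exact h
  have hN0' : (0:ℝ) < N := by exact_mod_cast hN0
  set M := Real.sqrt N with hM
  have hM0 : 0 < M := Real.sqrt_pos.2 hN0'
  have hM2 : M ^ 2 = N := Real.sq_sqrt hN0'.le
  set S : Ω → ℝ := fun ω => ∑ i, a' i * ε' i ω with hSdef
  have hSm : Measurable S := Finset.measurable_sum _ (fun i _ => (measurable_const.mul (hmeas i)))
  have heq' : (∫ ω, |S ω| ^ p ∂μ) ^ ((1:ℝ) / p) = (N : ℝ) ^ ((1 : ℝ) / 2 - 1 / p) := by
    simp only [hSdef]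
    exact heq
  have hmsets : ∀ (i : Fin N) (s : ℝ), MeasurableSet {ω | ε' i ω = s} := fun i s =>
    hmeas i (measurableSet_singleton s)
  have hsingle : ∀ (i : Fin N) (s : ℝ), s = 1 ∨ s = -1 → μ {ω | ε' i ω = s} = 2⁻¹ := by
    intro i s hs
    have h := hprob {i} (by simp) (fun _ => s) (fun _ => hs)
    simpa using h
  -- a.e. each coordinate is ±1
  have hpm : ∀ᵐ ω ∂μ, ∀ i, ε' i ω = 1 ∨ ε' i ω = -1 := by
    rw [MeasureTheory.ae_all_iff]
    intro i
    have hdisj : Disjoint {ω | ε' i ω = 1} {ω | ε' i ω = (-1:ℝ)} := by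
      rw [Set.disjoint_left]
      intro ω h1 h2
      simp only [Set.mem_setOf_eq] at h1 h2
      rw [h1] at h2; norm_num at h2
    have hu : μ ({ω | ε' i ω = 1} ∪ {ω | ε' i ω = -1}) = 1 := by
      rw [measure_union hdisj (hmsets i (-1)), hsingle i 1 (Or.inl rfl),
        hsingle i (-1) (Or.inr rfl), ENNReal.inv_two_add_inv_two]
    apply MeasureTheory.ae_iff.2
    have hset : {ω | ¬(ε' i ω = 1 ∨ ε' i ω = -1)}
        = ({ω | ε' i ω = 1} ∪ {ω | ε' i ω = -1})ᶜ := by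
      ext ω; simp [not_or]
    rw [hset]
    exact (prob_compl_eq_zero_iff ((hmsets i 1).union (hmsets i (-1)))).2 hu
  -- pairwise pattern probabilities
  have hpairP : ∀ (i j : Fin N), i ≠ j → ∀ (s t : ℝ), (s = 1 ∨ s = -1) → (t = 1 ∨ t = -1) →
      μ {ω | ε' i ω = s ∧ ε' j ω = t} = 4⁻¹ := by
    intro i j hij s t hs ht
    have hcard : ({i, j} : Finset (Fin N)).card = 2 := by
      rw [Finset.card_insert_of_notMem (by simpa using hij), Finset.card_singleton]
    have h := hprob {i, j} (le_of_eq hcard) (fun k => if k = i then s else t)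
      (fun k => by by_cases hk : k = i <;> simp [hk, hs, ht])
    rw [hcard] at h
    have hset : {ω | ∀ k ∈ ({i,j} : Finset (Fin N)), ε' k ω = if k = i then s else t}
        = {ω | ε' i ω = s ∧ ε' j ω = t} := by
      ext ω
      simp only [Finset.mem_insert, Finset.mem_singleton, Set.mem_setOf_eq]
      constructor
      · intro hω
        refine ⟨by simpa using hω i (Or.inl rfl), ?_⟩
        have := hω j (Or.inr rfl)
        rwa [if_neg (Ne.symm hij)] at this
      · rintro ⟨h1, h2⟩ k hk
        rcases hk with rfl | rfl
        · simpa using h1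
        · rw [if_neg (Ne.symm hij)]; exact h2
    rw [hset] at h
    rw [h, ← ENNReal.inv_pow]
    norm_num
  -- second moments of products
  have hprod : ∀ i j : Fin N, Integrable (fun ω => ε' i ω * ε' j ω) μ ∧
      ∫ ω, ε' i ω * ε' j ω ∂μ = if i = j then 1 else 0 := by
    intro i j
    by_cases hij : i = j
    · subst hij
      have hone : (fun ω => ε' i ω * ε' i ω) =ᵐ[μ] (fun _ => (1:ℝ)) := by
        filter_upwards [hpm] with ω hω
        rcases hω i with h | h <;> rw [h] <;> norm_num
      constructor
      · exact (integrable_const (1:ℝ)).congr hone.symm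
      · rw [integral_congr_ae hone]; simp
    · set A : ℝ → ℝ → Set Ω := fun s t => {ω | ε' i ω = s ∧ ε' j ω = t} with hA
      have hAm : ∀ s t, MeasurableSet (A s t) := fun s t => (hmsets i s).inter (hmsets j t)
      set f : Ω → ℝ := fun ω => (A 1 1).indicator (fun _ => (1:ℝ)) ω
        + (A (-1) (-1)).indicator (fun _ => (1:ℝ)) ω
        - (A 1 (-1)).indicator (fun _ => (1:ℝ)) ω
        - (A (-1) 1).indicator (fun _ => (1:ℝ)) ω with hf
      have hfe : (fun ω => ε' i ω * ε' j ω) =ᵐ[μ] f := by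
        filter_upwards [hpm] with ω hω
        rcases hω i with hi | hi <;> rcases hω j with hj | hj <;>
          norm_num [hf, hi, hj, Set.indicator_apply, hA, Set.mem_setOf_eq]
      have hind : ∀ s t : ℝ, Integrable ((A s t).indicator (fun _ => (1:ℝ))) μ :=
        fun s t => (integrable_const 1).indicator (hAm s t)
      have hfint : Integrable f μ :=
        (((hind 1 1).add (hind (-1) (-1))).sub (hind 1 (-1))).sub (hind (-1) 1)
      refine ⟨hfint.congr hfe.symm, ?_⟩
      rw [if_neg hij, integral_congr_ae hfe]
      have hval : ∀ s t : ℝ, (s = 1 ∨ s = -1) → (t = 1 ∨ t = -1) →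
          ∫ ω, (A s t).indicator (fun _ => (1:ℝ)) ω ∂μ = (4:ℝ)⁻¹ := by
        intro s t hs ht
        rw [integral_indicator_const _ (hAm s t), measureReal_def, hpairP i j hij s t hs ht]
        norm_num [ENNReal.toReal_inv]
      simp only [hf]
      have hi12 : Integrable (fun ω => (A 1 1).indicator (fun _ => (1:ℝ)) ω
          + (A (-1) (-1)).indicator (fun _ => (1:ℝ)) ω) μ := (hind 1 1).add (hind (-1) (-1))
      have hi123 : Integrable (fun ω => (A 1 1).indicator (fun _ => (1:ℝ)) ω
          + (A (-1) (-1)).indicator (fun _ => (1:ℝ)) ω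
          - (A 1 (-1)).indicator (fun _ => (1:ℝ)) ω) μ := hi12.sub (hind 1 (-1))
      rw [integral_sub hi123 (hind (-1) 1),
        integral_sub hi12 (hind 1 (-1)),
        integral_add (hind 1 1) (hind (-1) (-1)),
        hval 1 1 (Or.inl rfl) (Or.inl rfl), hval (-1) (-1) (Or.inr rfl) (Or.inr rfl),
        hval 1 (-1) (Or.inl rfl) (Or.inr rfl), hval (-1) 1 (Or.inr rfl) (Or.inl rfl)]
      ring
  -- second moment of the sum
  have hS2 : ∫ ω, S ω ^ 2 ∂μ = 1 := by
    simp only [hSdef]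
    have hrw : ∀ ω : Ω, (∑ i, a' i * ε' i ω) ^ 2
        = ∑ i, ∑ j, (a' i * a' j) * (ε' i ω * ε' j ω) := by
      intro ω
      rw [sq, Finset.sum_mul_sum]
      exact Finset.sum_congr rfl fun i _ => Finset.sum_congr rfl fun j _ => by ring
    simp only [hrw]
    rw [integral_finset_sum _ (fun i _ =>
      integrable_finset_sum _ (fun j _ => ((hprod i j).1.const_mul _)))]
    have hinner : ∀ i : Fin N, ∫ ω, ∑ j, (a' i * a' j) * (ε' i ω * ε' j ω) ∂μ
        = ∑ j, (a' i * a' j) * (if i = j then 1 else 0) := by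
      intro i
      rw [integral_finset_sum _ (fun j _ => (hprod i j).1.const_mul _)]
      exact Finset.sum_congr rfl fun j _ => by
        rw [MeasureTheory.integral_const_mul, (hprod i j).2]
    simp only [hinner, mul_ite, mul_one, mul_zero, Finset.sum_ite_eq, Finset.mem_univ, if_true]
    simpa [sq] using ha
  -- deterministic bound on the sum of |a'|
  have hsum_abs_le : ∑ i, |a' i| ≤ M := by
    have h1 : (∑ i, |a' i|) ^ 2 ≤ (N:ℝ) * ∑ i, (a' i) ^ 2 := by
      have h := Finset.sum_mul_sq_le_sq_mul_sq Finset.univ (fun _ => (1:ℝ)) (fun i => |a' i|)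
      simpa [sq_abs, Finset.card_univ] using h
    rw [ha, mul_one] at h1
    exact (Real.le_sqrt (Finset.sum_nonneg fun i _ => abs_nonneg _) hN0'.le).2 h1
  -- a.e. bound on |S|
  have hSle : ∀ᵐ ω ∂μ, |S ω| ≤ M := by
    filter_upwards [hpm] with ω hω
    calc |S ω| ≤ ∑ i, |a' i * ε' i ω| := Finset.abs_sum_le_sum_abs _ _
      _ = ∑ i, |a' i| := Finset.sum_congr rfl fun i _ => by
          rcases hω i with h | h <;> rw [abs_mul, h] <;> simp
      _ ≤ M := hsum_abs_le
  -- equality analysis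
  have hppos : (0:ℝ) < p := by linarith
  have hqpos : (0:ℝ) < p - 2 := by linarith
  have hS2int : Integrable (fun ω => S ω ^ 2) μ := by
    refine ⟨(hSm.pow_const 2).aestronglyMeasurable, HasFiniteIntegral.of_bounded (C := M ^ 2) ?_⟩
    filter_upwards [hSle] with ω h
    rw [Real.norm_eq_abs, abs_of_nonneg (sq_nonneg _), ← sq_abs]
    exact pow_le_pow_left₀ (abs_nonneg _) h 2
  have hIp_meas : Measurable (fun ω => |S ω| ^ p) :=
    (Real.continuous_rpow_const hppos.le).measurable.comp hSm.abs
  have hIp_int : Integrable (fun ω => |S ω| ^ p) μ := by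
    refine ⟨hIp_meas.aestronglyMeasurable, HasFiniteIntegral.of_bounded (C := M ^ p) ?_⟩
    filter_upwards [hSle] with ω h
    rw [Real.norm_eq_abs, abs_of_nonneg (Real.rpow_nonneg (abs_nonneg _) p)]
    exact Real.rpow_le_rpow (abs_nonneg _) h hppos.le
  have hInonneg : 0 ≤ ∫ ω, |S ω| ^ p ∂μ :=
    integral_nonneg fun ω => Real.rpow_nonneg (abs_nonneg _) _
  have hIval : ∫ ω, |S ω| ^ p ∂μ = M ^ (p - 2) := by
    have h1 : ((∫ ω, |S ω| ^ p ∂μ) ^ ((1:ℝ)/p)) ^ p = ∫ ω, |S ω| ^ p ∂μ := by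
      rw [← Real.rpow_mul hInonneg, one_div, inv_mul_cancel₀ hppos.ne', Real.rpow_one]
    have h2 : ((N:ℝ) ^ ((1:ℝ)/2 - 1/p)) ^ p = M ^ (p - 2) := by
      have hN : (N:ℝ) = M ^ (2:ℝ) := by
        rw [Real.rpow_two, hM2]
      rw [hN, ← Real.rpow_mul hM0.le, ← Real.rpow_mul hM0.le]
      congr 1
      field_simp
    rw [← h1, heq', h2]
  have hkey : ∀ ω : Ω, |S ω| ^ p = |S ω| ^ (p - 2) * S ω ^ 2 := by
    intro ω
    rcases eq_or_lt_of_le (abs_nonneg (S ω)) with h0 | h0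
    · have hs0 : S ω = 0 := abs_eq_zero.1 h0.symm
      rw [← h0, Real.zero_rpow hppos.ne', Real.zero_rpow hqpos.ne', hs0]
      ring
    · have hsq : S ω ^ 2 = |S ω| ^ (2:ℝ) := by rw [Real.rpow_two, sq_abs]
      rw [hsq, ← Real.rpow_add h0]
      norm_num
  have hgnn : 0 ≤ᵐ[μ] (fun ω => M ^ (p-2) * S ω ^ 2 - |S ω| ^ p) := by
    filter_upwards [hSle] with ω h
    simp only [Pi.zero_apply]
    have hle : |S ω| ^ (p-2) ≤ M ^ (p-2) := Real.rpow_le_rpow (abs_nonneg _) h hqpos.le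
    have := hkey ω
    nlinarith [sq_nonneg (S ω)]
  have hgint : Integrable (fun ω => M ^ (p-2) * S ω ^ 2 - |S ω| ^ p) μ :=
    (hS2int.const_mul _).sub hIp_int
  have hgzero : ∫ ω, (M ^ (p-2) * S ω ^ 2 - |S ω| ^ p) ∂μ = 0 := by
    rw [integral_sub (hS2int.const_mul _) hIp_int, MeasureTheory.integral_const_mul, hS2, hIval]
    ring
  have hgae : (fun ω => M ^ (p-2) * S ω ^ 2 - |S ω| ^ p) =ᵐ[μ] 0 :=
    (integral_eq_zero_iff_of_nonneg_ae hgnn hgint).1 hgzero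
  have hdich : ∀ᵐ ω ∂μ, (∀ i, ε' i ω = 1 ∨ ε' i ω = -1) ∧ (S ω = 0 ∨ |S ω| = M) := by
    filter_upwards [hpm, hgae, hSle] with ω h1 h3 h2
    refine ⟨h1, ?_⟩
    by_cases h0 : S ω = 0
    · exact Or.inl h0
    right
    have h3' : M ^ (p-2) * S ω ^ 2 - |S ω| ^ p = 0 := h3
    rw [hkey ω] at h3'
    have hfac : (M ^ (p-2) - |S ω| ^ (p-2)) * S ω ^ 2 = 0 := by
      rw [sub_mul]; linarith
    rcases mul_eq_zero.1 hfac with h | h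
    · have heqr : |S ω| ^ (p-2) = M ^ (p-2) := by linarith
      exact Real.rpow_left_injOn hqpos.ne' (abs_nonneg (S ω)) hM0.le heqr
    · exact absurd h (pow_ne_zero _ h0)
  -- extract a point witnessing equality
  set P : Ω → Prop := fun ω => (∀ i, ε' i ω = 1 ∨ ε' i ω = -1) ∧ (S ω = 0 ∨ |S ω| = M) with hP
  set A : Set Ω := {ω | |S ω| = M} with hA
  have hAmeas : MeasurableSet A := hSm.abs (measurableSet_singleton M)
  have hind_eq : (fun ω => S ω ^ 2) =ᵐ[μ] A.indicator (fun _ => (N:ℝ)) := by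
    filter_upwards [hdich] with ω hω
    rcases hω.2 with h | h
    · have hnm : ω ∉ A := by
        simp only [hA, Set.mem_setOf_eq, h, abs_zero]
        exact hM0.ne
      rw [Set.indicator_of_notMem hnm, h]
      ring
    · have hm : ω ∈ A := h
      rw [Set.indicator_of_mem hm, ← hM2, ← sq_abs, h]
  have hAne : μ A ≠ 0 := by
    intro hA0
    have h0 : ∫ ω, S ω ^ 2 ∂μ = 0 := by
      rw [integral_congr_ae hind_eq, integral_indicator_const _ hAmeas, measureReal_def, hA0]
      simp
    rw [hS2] at h0
    norm_num at h0
  obtain ⟨ω₀, hω₀A, hω₀P⟩ : ∃ ω, ω ∈ A ∧ P ω := by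
    have hGc : μ {ω | ¬ P ω} = 0 := MeasureTheory.ae_iff.1 hdich
    have hsub : A ⊆ (A ∩ {ω | P ω}) ∪ {ω | ¬ P ω} := by
      intro ω hω
      by_cases h : P ω
      · exact Or.inl ⟨hω, h⟩
      · exact Or.inr h
    have hle : μ A ≤ μ (A ∩ {ω | P ω}) + μ {ω | ¬ P ω} :=
      (measure_mono hsub).trans (measure_union_le _ _)
    rw [hGc, add_zero] at hle
    have hne : μ (A ∩ {ω | P ω}) ≠ 0 := by
      intro h0
      exact hAne (le_antisymm (h0 ▸ hle) (by simp))
    obtain ⟨ω, hω⟩ := nonempty_of_measure_ne_zero hne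
    exact ⟨ω, hω.1, hω.2⟩
  -- Part 1: all |a' i| are equal to 1/√N
  have hpart1 : ∀ i, |a' i| = (Real.sqrt N)⁻¹ := by
    have hSub : |S ω₀| = M := hω₀A
    have habs1 : M ≤ ∑ i, |a' i| := by
      rw [← hSub, hSdef]
      calc |∑ i, a' i * ε' i ω₀| ≤ ∑ i, |a' i * ε' i ω₀| := Finset.abs_sum_le_sum_abs _ _
        _ = ∑ i, |a' i| := Finset.sum_congr rfl fun i _ => by
            rcases hω₀P.1 i with h | h <;> rw [abs_mul, h] <;> simp
    have hsum_eq : ∑ i, |a' i| = M := le_antisymm hsum_abs_le habs1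
    have hsq : (∑ i, |a' i|) ^ 2 = (N:ℝ) * ∑ i, (|a' i|) ^ 2 := by
      rw [hsum_eq, hM2]
      simp only [sq_abs]
      rw [ha, mul_one]
    have hconst := aux_cs_eq (fun i => |a' i|) hsq
    intro i
    have hsum : (N:ℝ) * |a' i| ^ 2 = 1 := by
      calc (N:ℝ) * |a' i| ^ 2 = ∑ _j : Fin N, |a' i| ^ 2 := by
            rw [Finset.sum_const, Finset.card_univ, Fintype.card_fin, nsmul_eq_mul]
        _ = ∑ j, |a' j| ^ 2 := Finset.sum_congr rfl fun j _ => by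
            have h := hconst i j
            rw [h]
        _ = 1 := by simp only [sq_abs]; exact ha
    rw [sq_abs] at hsum
    have h2 : |a' i| ^ 2 = (M⁻¹) ^ 2 := by
      rw [inv_pow, hM2, sq_abs]
      field_simp
      linarith
    have h3 : Real.sqrt (|a' i| ^ 2) = Real.sqrt ((M⁻¹) ^ 2) := by rw [h2]
    rw [Real.sqrt_sq (abs_nonneg _), Real.sqrt_sq (inv_nonneg.2 hM0.le)] at h3
    rw [h3, hM]
  refine ⟨hpart1, ?_⟩
  -- Part 2: a.e. structure of the signs
  have hMinv : (Real.sqrt N)⁻¹ = M⁻¹ := by rw [hM]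
  filter_upwards [hdich] with ω hω
  have hai : ∀ i, a' i ≠ 0 := by
    intro i h
    have hh := hpart1 i
    rw [h, abs_zero, hMinv] at hh
    exact (inv_pos.2 hM0).ne hh
  have hsign : ∀ i, Real.sign (a' i) = 1 ∨ Real.sign (a' i) = -1 := by
    intro i
    rcases Real.sign_apply_eq_of_ne_zero (a' i) (hai i) with h | h
    · exact Or.inr h
    · exact Or.inl h
  have hsa : ∀ i, a' i = Real.sign (a' i) * M⁻¹ := by
    intro i
    have h1 := hpart1 i
    rw [hMinv] at h1
    rcases lt_trichotomy (a' i) 0 with h | h | h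
    · rw [Real.sign_of_neg h]
      rw [abs_of_neg h] at h1
      linarith
    · exact absurd h (hai i)
    · rw [Real.sign_of_pos h]
      rw [abs_of_pos h] at h1
      linarith
  set c : Fin N → ℝ := fun i => Real.sign (a' i) * ε' i ω with hc
  have hcpm : ∀ i, c i = 1 ∨ c i = -1 := by
    intro i
    rcases hsign i with h | h <;> rcases hω.1 i with h' | h' <;>
      simp only [hc, h, h'] <;> norm_num
  have hceq : ∀ i, c i = 1 ↔ ε' i ω = Real.sign (a' i) := by
    intro i
    rcases hsign i with h | h <;> rcases hω.1 i with h' | h' <;>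
      simp only [hc, h, h'] <;> norm_num
  have hScT : M * S ω = ∑ i, c i := by
    rw [hSdef, Finset.mul_sum]
    refine Finset.sum_congr rfl fun i _ => ?_
    rw [hsa i]
    simp only [hc]
    field_simp
  have hsum_c : ∑ i, c i = 2 * ((Finset.univ.filter (fun i => c i = 1)).card : ℝ) - N :=
    aux_signsum c hcpm
  have hfilter : Finset.univ.filter (fun i => c i = 1)
      = Finset.univ.filter (fun i => ε' i ω = Real.sign (a' i)) :=
    Finset.filter_congr fun i _ => hceq i
  rcases hω.2 with h0 | hM'
  · right; right
    have hz : ∑ i, c i = 0 := by rw [← hScT, h0, mul_zero]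
    rw [hsum_c] at hz
    have hfin : 2 * (((Finset.univ.filter (fun i => ε' i ω = Real.sign (a' i))).card : ℕ) : ℝ)
        = N := by
      rw [← hfilter]; linarith
    exact_mod_cast hfin
  · rcases (abs_eq hM0.le).1 hM' with hpos | hneg
    · left
      intro i
      have hTN : ∑ i, c i = N := by
        rw [← hScT, hpos, ← hM2]
        ring
      rw [hsum_c] at hTN
      have hcard : ((Finset.univ.filter (fun i => c i = 1)).card : ℝ) = (N:ℝ) := by linarith
      have hcard' : (Finset.univ.filter (fun i => c i = 1)).card = N := by exact_mod_cast hcard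
      have huniv : Finset.univ.filter (fun i => c i = 1) = Finset.univ :=
        Finset.eq_univ_of_card _ (by rw [hcard', Fintype.card_fin])
      have hci : c i = 1 := by
        have hmem : i ∈ Finset.univ.filter (fun i => c i = 1) := by
          rw [huniv]; exact Finset.mem_univ i
        exact (Finset.mem_filter.1 hmem).2
      exact (hceq i).1 hci
    · right; left
      intro i
      have hTN : ∑ i, c i = -(N:ℝ) := by
        rw [← hScT, hneg, ← hM2]
        ring
      rw [hsum_c] at hTN
      have hcard : ((Finset.univ.filter (fun i => c i = 1)).card : ℝ) = 0 := by linarith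
      have hcard' : (Finset.univ.filter (fun i => c i = 1)).card = 0 := by exact_mod_cast hcard
      have hempty : Finset.univ.filter (fun i => c i = 1) = ∅ := Finset.card_eq_zero.1 hcard'
      have hci : c i ≠ 1 := by
        intro h
        have hmem : i ∈ Finset.univ.filter (fun i => c i = 1) :=
          Finset.mem_filter.2 ⟨Finset.mem_univ i, h⟩
        rw [hempty] at hmem
        exact absurd hmem (Finset.notMem_empty i)
      have hci' : c i = -1 := (hcpm i).resolve_left hci
      simp only [hc] at hci'
      rcases hsign i with h | h <;> rw [h] at hci' ⊢ <;> linarith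
end
end

section
/- Under the hypotheses of the equality case (N even, p > 2, ε' pairwise independent Rademacher, equality (E|∑a'ᵢε'ᵢ|^p)^{1/p} = N^{1/2−1/p}‖a'‖₂), the law P' of ε' satisfies P'{ε'ᵢ = sgn(a'ᵢ) for all i} = P'{ε'ᵢ = −sgn(a'ᵢ) for all i} = 1/(2N). -/
open MeasureTheory ENNReal

noncomputable section

namespace EqCaseAux

variable {Ω : Type*} [MeasurableSpace Ω] {μ : Measure Ω} [IsProbabilityMeasure μ]

lemma integrable_of_aebdd {f : Ω → ℝ} (hf : Measurable f) (C : ℝ)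
    (h : ∀ᵐ ω ∂μ, |f ω| ≤ C) : Integrable f μ :=
  (integrable_const C).mono' hf.aestronglyMeasurable
    (by filter_upwards [h] with ω hω using by simpa [Real.norm_eq_abs] using hω)

lemma integral_indicator_sum {n : ℕ} (s : Fin n → Set Ω) (hs : ∀ k, MeasurableSet (s k))
    (v : Fin n → ℝ) {f : Ω → ℝ}
    (hf : f =ᵐ[μ] fun ω => ∑ k, (s k).indicator (fun _ => v k) ω) :
    ∫ ω, f ω ∂μ = ∑ k, (μ (s k)).toReal * v k := by
  rw [integral_congr_ae hf,
    integral_finset_sum _ (fun k _ => (integrable_const (v k)).indicator (hs k))]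
  exact Finset.sum_congr rfl fun k _ => by
    rw [integral_indicator_const _ (hs k), smul_eq_mul]; rfl

variable {N : ℕ} {ε : Fin N → Ω → ℝ}

lemma single_prob (hε : IsKWiseRademacher μ 2 ε) (i : Fin N) {v : ℝ}
    (hv : v = 1 ∨ v = -1) : μ {ω | ε i ω = v} = 2⁻¹ := by
  have h := hε.2 {i} (by simp) (fun _ => v) (fun _ => hv)
  simpa using h

lemma pair_prob (hε : IsKWiseRademacher μ 2 ε) {i j : Fin N} (hij : i ≠ j) {v w : ℝ}
    (hv : v = 1 ∨ v = -1) (hw : w = 1 ∨ w = -1) :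
    μ {ω | ε i ω = v ∧ ε j ω = w} = 4⁻¹ := by
  classical
  have hcard : ({i, j} : Finset (Fin N)).card = 2 := by
    rw [Finset.card_insert_of_notMem (by simpa using hij), Finset.card_singleton]
  have h := hε.2 {i, j} (by rw [hcard]) (fun k => if k = i then v else w)
    (fun k => by by_cases hk : k = i <;> simp [hk, hv, hw])
  have hset : {ω | ∀ k ∈ ({i, j} : Finset (Fin N)), ε k ω = if k = i then v else w}
      = {ω | ε i ω = v ∧ ε j ω = w} := by
    ext ω
    simp only [Set.mem_setOf_eq, Finset.mem_insert, Finset.mem_singleton]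
    constructor
    · intro h
      refine ⟨by simpa using h i (Or.inl rfl), ?_⟩
      have := h j (Or.inr rfl)
      simpa [if_neg hij.symm] using this
    · rintro ⟨h1, h2⟩ k hk
      rcases hk with rfl | rfl
      · simpa using h1
      · simpa [if_neg hij.symm] using h2
  rw [hset, hcard] at h
  rw [h, pow_two, ← ENNReal.mul_inv (by norm_num) (by norm_num)]
  norm_num

lemma ae_pm_one (hε : IsKWiseRademacher μ 2 ε) :
    ∀ᵐ ω ∂μ, ∀ i, ε i ω = 1 ∨ ε i ω = -1 := by
  rw [ae_all_iff]
  intro i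
  have hm1 : MeasurableSet {ω | ε i ω = 1} := hε.1 i (measurableSet_singleton 1)
  have hm2 : MeasurableSet {ω | ε i ω = -1} := hε.1 i (measurableSet_singleton (-1))
  have hdisj : Disjoint {ω | ε i ω = 1} {ω | ε i ω = -1} :=
    Set.disjoint_left.mpr fun ω h1 h2 => by
      simp only [Set.mem_setOf_eq] at h1 h2; rw [h1] at h2; norm_num at h2
  have hun : μ ({ω | ε i ω = 1} ∪ {ω | ε i ω = -1}) = 1 := by
    rw [measure_union hdisj hm2, single_prob hε i (Or.inl rfl),
      single_prob hε i (Or.inr rfl), ENNReal.inv_two_add_inv_two]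
  have hcompl : μ ({ω | ε i ω = 1} ∪ {ω | ε i ω = -1})ᶜ = 0 := by
    rw [prob_compl_eq_one_sub (hm1.union hm2), hun, tsub_self]
  have hset : {ω | ¬(ε i ω = 1 ∨ ε i ω = -1)} = ({ω | ε i ω = 1} ∪ {ω | ε i ω = -1})ᶜ := by
    ext ω; simp [not_or]
  rw [ae_iff, hset]
  exact hcompl

lemma integral_eps (hε : IsKWiseRademacher μ 2 ε) (i : Fin N) :
    ∫ ω, ε i ω ∂μ = 0 := by
  have hm1 : MeasurableSet {ω | ε i ω = 1} := hε.1 i (measurableSet_singleton 1)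
  have hm2 : MeasurableSet {ω | ε i ω = -1} := hε.1 i (measurableSet_singleton (-1))
  have h := integral_indicator_sum (μ := μ) ![{ω | ε i ω = 1}, {ω | ε i ω = -1}]
    (by intro k; fin_cases k <;> assumption) ![1, -1] (f := ε i) ?_
  · rw [h, Fin.sum_univ_two]
    simp only [Matrix.cons_val_zero, Matrix.cons_val_one, Matrix.head_cons]
    rw [single_prob hε i (Or.inl rfl), single_prob hε i (Or.inr rfl)]
    norm_num
  · filter_upwards [ae_pm_one hε] with ω hω
    rcases hω i with h1 | h1 <;>
      simp [Fin.sum_univ_two, Set.indicator_apply, Set.mem_setOf_eq, h1] <;> norm_num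
lemma integral_eps_mul (hε : IsKWiseRademacher μ 2 ε) (i j : Fin N) :
    ∫ ω, ε i ω * ε j ω ∂μ = if i = j then 1 else 0 := by
  rcases eq_or_ne i j with rfl | hij
  · rw [if_pos rfl]
    have : (fun ω => ε i ω * ε i ω) =ᵐ[μ] fun _ => (1 : ℝ) := by
      filter_upwards [ae_pm_one hε] with ω hω
      rcases hω i with h1 | h1 <;> rw [h1] <;> norm_num
    rw [integral_congr_ae this]
    simp
  · rw [if_neg hij]
    have hms : ∀ v : ℝ, ∀ w : ℝ, MeasurableSet {ω | ε i ω = v ∧ ε j ω = w} := by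
      intro v w
      exact (hε.1 i (measurableSet_singleton v)).inter (hε.1 j (measurableSet_singleton w))
    have h := integral_indicator_sum (μ := μ)
      ![{ω | ε i ω = 1 ∧ ε j ω = 1}, {ω | ε i ω = -1 ∧ ε j ω = -1},
        {ω | ε i ω = 1 ∧ ε j ω = -1}, {ω | ε i ω = -1 ∧ ε j ω = 1}]
      (by intro k; fin_cases k <;> exact hms _ _) ![1, 1, -1, -1]
      (f := fun ω => ε i ω * ε j ω) ?_
    · rw [h, Fin.sum_univ_four]
      simp only [Matrix.cons_val_zero, Matrix.cons_val_one, Matrix.head_cons,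
        Matrix.cons_val_two, Matrix.cons_val_three, Matrix.tail_cons, Matrix.head_fin_const]
      rw [pair_prob hε hij (Or.inl rfl) (Or.inl rfl),
        pair_prob hε hij (Or.inr rfl) (Or.inr rfl),
        pair_prob hε hij (Or.inl rfl) (Or.inr rfl),
        pair_prob hε hij (Or.inr rfl) (Or.inl rfl)]
      norm_num
    · filter_upwards [ae_pm_one hε] with ω hω
      rcases hω i with h1 | h1 <;> rcases hω j with h2 | h2 <;>
        simp [Fin.sum_univ_four, Set.indicator_apply, Set.mem_setOf_eq, h1, h2] <;> norm_num

lemma integral_S (hε : IsKWiseRademacher μ 2 ε) (a : Fin N → ℝ) :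
    ∫ ω, ∑ i, a i * ε i ω ∂μ = 0 := by
  have hint : ∀ i : Fin N, Integrable (fun ω => a i * ε i ω) μ := by
    intro i
    refine integrable_of_aebdd ((hε.1 i).const_mul (a i)) |a i| ?_
    filter_upwards [ae_pm_one hε] with ω hω
    rcases hω i with h1 | h1 <;> rw [h1] <;> simp
  rw [integral_finset_sum _ (fun i _ => hint i)]
  refine Finset.sum_eq_zero fun i _ => ?_
  rw [integral_const_mul, integral_eps hε i, mul_zero]

lemma integral_S_sq (hε : IsKWiseRademacher μ 2 ε) (a : Fin N → ℝ) :
    ∫ ω, (∑ i, a i * ε i ω) ^ 2 ∂μ = ∑ i, (a i) ^ 2 := by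
  have hintp : ∀ i j : Fin N, Integrable (fun ω => (a i * a j) * (ε i ω * ε j ω)) μ := by
    intro i j
    refine integrable_of_aebdd (((hε.1 i).mul (hε.1 j)).const_mul _) |a i * a j| ?_
    filter_upwards [ae_pm_one hε] with ω hω
    rcases hω i with h1 | h1 <;> rcases hω j with h2 | h2 <;> rw [h1, h2] <;> simp
  have hpt : ∀ ω, (∑ i, a i * ε i ω) ^ 2 = ∑ i, ∑ j, (a i * a j) * (ε i ω * ε j ω) := by
    intro ω
    rw [sq, Finset.sum_mul_sum]
    exact Finset.sum_congr rfl fun i _ => Finset.sum_congr rfl fun j _ => by ring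
  calc ∫ ω, (∑ i, a i * ε i ω) ^ 2 ∂μ
      = ∫ ω, ∑ i, ∑ j, (a i * a j) * (ε i ω * ε j ω) ∂μ := by
        congr 1; ext ω; exact hpt ω
    _ = ∑ i, ∑ j, ∫ ω, (a i * a j) * (ε i ω * ε j ω) ∂μ := by
        rw [integral_finset_sum _ (fun i _ => integrable_finset_sum _ (fun j _ => hintp i j))]
        exact Finset.sum_congr rfl fun i _ =>
          integral_finset_sum _ (fun j _ => hintp i j)
    _ = ∑ i, ∑ j, (a i * a j) * (if i = j then (1:ℝ) else 0) := by
        exact Finset.sum_congr rfl fun i _ => Finset.sum_congr rfl fun j _ => by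
          rw [integral_const_mul, integral_eps_mul hε i j]
    _ = ∑ i, (a i) ^ 2 := by
        refine Finset.sum_congr rfl fun i _ => ?_
        rw [Finset.sum_eq_single i (fun j _ hji => by rw [if_neg (Ne.symm hji), mul_zero])
          (fun h => absurd (Finset.mem_univ i) h)]
        rw [if_pos rfl, mul_one, sq]

end EqCaseAux

set_option maxHeartbeats 2000000 in
open EqCaseAux in
/-- in the equality case, the two extreme sign patterns each occur with
probability `1/(2N)`. -/
theorem equality_case_extreme_prob {Ω : Type*} [MeasurableSpace Ω]
    (μ : Measure Ω) [IsProbabilityMeasure μ] {N : ℕ} (hNe : Even N) (p : ℝ) (hp : 2 < p)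
    (ε' : Fin N → Ω → ℝ) (hε : IsKWiseRademacher μ 2 ε')
    (a' : Fin N → ℝ) (ha : a' ≠ 0)
    (heq : (∫ ω, |∑ i, a' i * ε' i ω| ^ p ∂μ) ^ (1 / p) =
      (N : ℝ) ^ ((1 : ℝ) / 2 - 1 / p) * Real.sqrt (∑ i, (a' i) ^ 2)) :
    μ {ω | ∀ i, ε' i ω = Real.sign (a' i)} = ((2 * N : ℕ) : ℝ≥0∞)⁻¹ ∧
    μ {ω | ∀ i, ε' i ω = -Real.sign (a' i)} = ((2 * N : ℕ) : ℝ≥0∞)⁻¹ := by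
  have hmeas := hε.1
  have hp0 : (0:ℝ) < p := by linarith
  have hN0 : 0 < N := Nat.pos_of_ne_zero (fun h => ha (by subst h; exact funext fun i => i.elim0))
  set S : Ω → ℝ := fun ω => ∑ i, a' i * ε' i ω with hS_def
  have hSm : Measurable S := by
    apply Finset.measurable_sum
    exact fun i _ => (hmeas i).const_mul (a' i)
  set A : ℝ := ∑ i, (a' i) ^ 2 with hA_def
  have hA : 0 < A := by
    obtain ⟨j, hj⟩ : ∃ j, a' j ≠ 0 := by
      by_contra h; push_neg at h; exact ha (funext h)
    exact Finset.sum_pos' (fun i _ => sq_nonneg _) ⟨j, Finset.mem_univ j, by positivity⟩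
  set c : ℝ := Real.sqrt (N * A) with hc_def
  have hc : 0 < c := Real.sqrt_pos.mpr (by positivity)
  have hc2 : c ^ 2 = N * A := Real.sq_sqrt (by positivity)
  set M : ℝ := ∑ i, |a' i| with hM_def
  have hM0 : 0 ≤ M := Finset.sum_nonneg fun i _ => abs_nonneg _
  have hM2 : M ^ 2 ≤ (N : ℝ) * A := by
    have h := sq_sum_le_card_mul_sum_sq (s := Finset.univ) (f := fun i => |a' i|)
    simpa [sq_abs, hA_def, hM_def] using h
  have hMc : M ≤ c := by
    rw [← Real.sqrt_sq hM0, hc_def]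
    exact Real.sqrt_le_sqrt hM2
  have hG := ae_pm_one hε
  have hGnull : μ {ω | ¬ ∀ i, ε' i ω = 1 ∨ ε' i ω = -1} = 0 := ae_iff.mp hG
  have hbd_pt : ∀ ω, (∀ i, ε' i ω = 1 ∨ ε' i ω = -1) → |S ω| ≤ M := by
    intro ω hω
    calc |S ω| ≤ ∑ i, |a' i * ε' i ω| := Finset.abs_sum_le_sum_abs _ _
      _ = M := Finset.sum_congr rfl fun i _ => by
          rcases hω i with h | h <;> rw [h] <;> simp
  have hSbd : ∀ᵐ ω ∂μ, |S ω| ≤ M := by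
    filter_upwards [hG] with ω hω using hbd_pt ω hω
  -- integrability
  have hS2m : Measurable fun ω => (S ω) ^ 2 := hSm.pow_const 2
  have hS2_int : Integrable (fun ω => (S ω) ^ 2) μ := by
    refine integrable_of_aebdd hS2m (M ^ 2) ?_
    filter_upwards [hSbd] with ω h
    rw [abs_pow]
    exact pow_le_pow_left₀ (abs_nonneg _) h 2
  have hSpm : Measurable fun ω => |S ω| ^ p :=
    (Real.continuous_rpow_const hp0.le).measurable.comp hSm.abs
  have hSp_int : Integrable (fun ω => |S ω| ^ p) μ := by
    refine integrable_of_aebdd hSpm (c ^ p) ?_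
    filter_upwards [hSbd] with ω h
    rw [abs_of_nonneg (Real.rpow_nonneg (abs_nonneg _) p)]
    exact Real.rpow_le_rpow (abs_nonneg _) (h.trans hMc) hp0.le
  -- moments
  have hES : ∫ ω, S ω ∂μ = 0 := integral_S hε a'
  have hES2 : ∫ ω, (S ω) ^ 2 ∂μ = A := integral_S_sq hε a'
  -- p-th moment value
  have hI0 : 0 ≤ ∫ ω, |S ω| ^ p ∂μ :=
    integral_nonneg fun ω => Real.rpow_nonneg (abs_nonneg _) p
  have hIp : ∫ ω, |S ω| ^ p ∂μ = c ^ (p - 2) * A := by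
    have h1 : ∫ ω, |S ω| ^ p ∂μ = ((N : ℝ) ^ ((1:ℝ)/2 - 1/p) * Real.sqrt A) ^ p := by
      have h := congrArg (fun x : ℝ => x ^ p) heq
      rwa [← Real.rpow_mul hI0, one_div_mul_cancel hp0.ne', Real.rpow_one] at h
    have hN' : (0:ℝ) ≤ (N : ℝ) := Nat.cast_nonneg N
    have h2 : ((N : ℝ) ^ ((1:ℝ)/2 - 1/p) * Real.sqrt A) ^ p = c ^ (p - 2) * A := by
      rw [Real.mul_rpow (Real.rpow_nonneg hN' _) (Real.sqrt_nonneg A),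
        ← Real.rpow_mul hN', Real.sqrt_eq_rpow, ← Real.rpow_mul hA.le]
      have hcr : c ^ (p - 2) = (N : ℝ) ^ ((p - 2)/2) * A ^ ((p - 2)/2) := by
        rw [hc_def, Real.sqrt_eq_rpow, ← Real.rpow_mul (by positivity),
          Real.mul_rpow hN' hA.le]
        ring_nf
      rw [hcr, show ((1:ℝ)/2 - 1/p) * p = (p - 2)/2 by field_simp,
        show (1:ℝ)/2 * p = (p - 2)/2 + 1 by field_simp; ring,
        Real.rpow_add hA, Real.rpow_one]
      ring
    rw [h1, h2]
  -- equality a.e.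
  have hg_nonneg : ∀ᵐ ω ∂μ, |S ω| ^ p ≤ c ^ (p - 2) * (S ω) ^ 2 := by
    filter_upwards [hSbd] with ω h
    have hx0 : (0:ℝ) ≤ |S ω| := abs_nonneg _
    have hxc : |S ω| ≤ c := h.trans hMc
    rcases eq_or_lt_of_le hx0 with h0 | h0
    · rw [← h0, Real.zero_rpow hp0.ne']
      positivity
    · have e2 : |S ω| ^ (2:ℝ) = (S ω) ^ 2 := by
        rw [show (2:ℝ) = ((2:ℕ):ℝ) by norm_num, Real.rpow_natCast, sq_abs]
      have e1 : |S ω| ^ p = |S ω| ^ (p - 2) * (S ω) ^ 2 := by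
        rw [← e2, ← Real.rpow_add h0]; ring_nf
      rw [e1]
      exact mul_le_mul_of_nonneg_right
        (Real.rpow_le_rpow hx0 hxc (by linarith)) (sq_nonneg _)
  have hg_ae : (fun ω => c ^ (p - 2) * (S ω) ^ 2 - |S ω| ^ p) =ᵐ[μ] 0 := by
    refine (integral_eq_zero_iff_of_nonneg_ae ?_ ?_).mp ?_
    · filter_upwards [hg_nonneg] with ω h
      simpa using sub_nonneg.mpr h
    · exact (hS2_int.const_mul _).sub hSp_int
    · rw [integral_sub (hS2_int.const_mul _) hSp_int, integral_const_mul, hES2, hIp]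
      ring
  have hval : ∀ᵐ ω ∂μ, S ω = 0 ∨ S ω = c ∨ S ω = -c := by
    filter_upwards [hg_ae, hSbd] with ω hg0 hb
    simp only [Pi.zero_apply, sub_eq_zero] at hg0
    by_cases h0 : S ω = 0
    · exact Or.inl h0
    · have hx : 0 < |S ω| := abs_pos.mpr h0
      have e2 : |S ω| ^ (2:ℝ) = (S ω) ^ 2 := by
        rw [show (2:ℝ) = ((2:ℕ):ℝ) by norm_num, Real.rpow_natCast, sq_abs]
      have e1 : |S ω| ^ p = |S ω| ^ (p - 2) * (S ω) ^ 2 := by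
        rw [← e2, ← Real.rpow_add hx]; ring_nf
      have hcan : |S ω| ^ (p - 2) = c ^ (p - 2) := by
        exact mul_right_cancel₀ (pow_ne_zero 2 h0) (hg0.trans e1).symm
      have habs : |S ω| = c := by
        rcases lt_trichotomy (|S ω|) c with hlt | heqc | hgt
        · exact absurd hcan (ne_of_lt (Real.rpow_lt_rpow (abs_nonneg _) hlt (by linarith)))
        · exact heqc
        · exact absurd (hb.trans hMc) (not_le.mpr hgt)
      rcases (abs_eq hc.le).mp habs with h | h
      · exact Or.inr (Or.inl h)
      · exact Or.inr (Or.inr h)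
  -- the two extreme events
  set Bp : Set Ω := S ⁻¹' {c} with hBp_def
  set Bm : Set Ω := S ⁻¹' {-c} with hBm_def
  have hBpm : MeasurableSet Bp := hSm (measurableSet_singleton c)
  have hBmm : MeasurableSet Bm := hSm (measurableSet_singleton (-c))
  have hmemp : ∀ ω, ω ∈ Bp ↔ S ω = c := fun ω => Iff.rfl
  have hmemm : ∀ ω, ω ∈ Bm ↔ S ω = -c := fun ω => Iff.rfl
  set rp : ℝ := (μ Bp).toReal with hrp_def
  set rm : ℝ := (μ Bm).toReal with hrm_def
  have hint1 : (0:ℝ) = rp * c + rm * (-c) := by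
    rw [← hES]
    have h := integral_indicator_sum (μ := μ) ![Bp, Bm]
      (by intro k; fin_cases k <;> assumption) ![c, -c] (f := S) ?_
    · rw [h, Fin.sum_univ_two]; simp [hrp_def, hrm_def]
    · filter_upwards [hval] with ω h
      rcases h with h | h | h <;>
        simp [Fin.sum_univ_two, Set.indicator_apply, hmemp, hmemm, h, hc.ne', hc.ne] <;>
        intro hh <;> (try exact absurd hh (by linarith)) <;> linarith
  have hint2 : A = rp * c ^ 2 + rm * c ^ 2 := by
    rw [← hES2]
    have h := integral_indicator_sum (μ := μ) ![Bp, Bm]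
      (by intro k; fin_cases k <;> assumption) ![c ^ 2, c ^ 2] (f := fun ω => (S ω) ^ 2) ?_
    · rw [h, Fin.sum_univ_two]; simp [hrp_def, hrm_def]
    · filter_upwards [hval] with ω h
      rcases h with h | h | h <;>
        simp [Fin.sum_univ_two, Set.indicator_apply, hmemp, hmemm, h, hc.ne', hc.ne] <;>
        intro hh <;> (try exact absurd hh (by linarith)) <;> linarith
  have hrpm : rp = rm := by
    have : c * (rp - rm) = 0 := by linarith
    rcases mul_eq_zero.mp this with h | h
    · exact absurd h hc.ne'
    · linarith
  have hrp_val : rp = 1 / (2 * N) := by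
    have h2 : A = (rp + rm) * ((N:ℝ) * A) := by rw [← hc2]; linarith
    have hN' : (0:ℝ) < N := by exact_mod_cast hN0
    have : (rp + rm) = 1 / N := by
      field_simp at h2 ⊢
      nlinarith
    rw [hrpm] at this ⊢
    field_simp at this ⊢
    linarith
  have hrm_val : rm = 1 / (2 * N) := hrpm ▸ hrp_val
  -- M = c
  have hMeqc : M = c := by
    have hN' : (0:ℝ) < N := by exact_mod_cast hN0
    have hne : μ Bp ≠ 0 := by
      intro h
      have h0 : rp = 0 := by rw [hrp_def, h]; simp
      have h1 : (1:ℝ) / (2 * N) = 0 := by rw [← hrp_val, h0]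
      rcases div_eq_zero_iff.mp h1 with h' | h'
      · exact one_ne_zero h'
      · linarith
    obtain ⟨ω, hωBp, hωG⟩ : ∃ ω, ω ∈ Bp ∧ (∀ i, ε' i ω = 1 ∨ ε' i ω = -1) := by
      by_contra hcon
      exact hne (measure_mono_null
        (fun ω hω hgood => hcon ⟨ω, hω, hgood⟩) hGnull)
    have hle : c ≤ M := by
      calc c = S ω := ((hmemp ω).mp hωBp).symm
        _ ≤ |S ω| := le_abs_self _
        _ ≤ M := hbd_pt ω hωG
    linarith
  -- all coefficients nonzero
  have hane : ∀ i, a' i ≠ 0 := by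
    intro j hj
    have h1 : M = ∑ i ∈ Finset.univ.erase j, |a' i| := by
      rw [hM_def, ← Finset.sum_erase_add _ _ (Finset.mem_univ j), hj, abs_zero, add_zero]
    have hsub : ∑ i ∈ Finset.univ.erase j, |a' i| ^ 2 ≤ A := by
      rw [hA_def]
      refine Finset.sum_le_sum_of_subset_of_nonneg (Finset.subset_univ _) ?_ |>.trans ?_
      · exact fun i _ _ => sq_nonneg _
      · exact le_of_eq (Finset.sum_congr rfl fun i _ => sq_abs _)
    have hcard : ((Finset.univ.erase j).card : ℝ) = (N:ℝ) - 1 := by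
      rw [Finset.card_erase_of_mem (Finset.mem_univ j), Finset.card_univ, Fintype.card_fin,
        Nat.cast_sub hN0, Nat.cast_one]
    have h2 : M ^ 2 ≤ ((N:ℝ) - 1) * A := by
      calc M ^ 2 = (∑ i ∈ Finset.univ.erase j, |a' i|) ^ 2 := by rw [h1]
        _ ≤ ((Finset.univ.erase j).card : ℝ) * ∑ i ∈ Finset.univ.erase j, |a' i| ^ 2 :=
            sq_sum_le_card_mul_sum_sq
        _ ≤ ((N:ℝ) - 1) * A := by
            rw [hcard]
            have hN1 : (0:ℝ) ≤ (N:ℝ) - 1 := by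
              have : (1:ℝ) ≤ N := by exact_mod_cast hN0
              linarith
            exact mul_le_mul_of_nonneg_left hsub hN1
    have h3 : M ^ 2 = (N:ℝ) * A := by rw [hMeqc, hc2]
    nlinarith
  have hsign : ∀ i, a' i * Real.sign (a' i) = |a' i| := by
    intro i
    rcases lt_or_gt_of_ne (hane i) with h | h
    · rw [Real.sign_of_neg h, abs_of_neg h]; ring
    · rw [Real.sign_of_pos h, abs_of_pos h]; ring
  -- event identification, plus side
  have hXBp : {ω | ∀ i, ε' i ω = Real.sign (a' i)} ⊆ Bp := by
    intro ω hω
    rw [Set.mem_setOf_eq] at hω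
    show S ω = c
    rw [← hMeqc]
    show ∑ i, a' i * ε' i ω = M
    rw [hM_def]
    calc ∑ i, a' i * ε' i ω = ∑ i, a' i * Real.sign (a' i) :=
          Finset.sum_congr rfl fun i _ => by rw [hω i]
      _ = ∑ i, |a' i| := Finset.sum_congr rfl fun i _ => hsign i
  have hBpX : ∀ ω, (∀ i, ε' i ω = 1 ∨ ε' i ω = -1) → ω ∈ Bp →
      ∀ i, ε' i ω = Real.sign (a' i) := by
    intro ω hωG hωB i
    have hsum : ∑ k, a' k * ε' k ω = ∑ k, |a' k| := by
      have h : S ω = c := (hmemp ω).mp hωB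
      rw [← hMeqc] at h
      calc ∑ k, a' k * ε' k ω = S ω := rfl
        _ = M := h
        _ = ∑ k, |a' k| := hM_def
    have hle : ∀ k ∈ Finset.univ, a' k * ε' k ω ≤ |a' k| := by
      intro k _
      calc a' k * ε' k ω ≤ |a' k * ε' k ω| := le_abs_self _
        _ = |a' k| := by rcases hωG k with h | h <;> rw [h] <;> simp
    have h := (Finset.sum_eq_sum_iff_of_le hle).mp hsum i (Finset.mem_univ i)
    exact mul_left_cancel₀ (hane i) (h.trans (hsign i).symm)
  -- event identification, minus side
  have hXBm : {ω | ∀ i, ε' i ω = -Real.sign (a' i)} ⊆ Bm := by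
    intro ω hω
    rw [Set.mem_setOf_eq] at hω
    show S ω = -c
    rw [← hMeqc]
    show ∑ i, a' i * ε' i ω = -M
    rw [hM_def, ← Finset.sum_neg_distrib]
    refine Finset.sum_congr rfl fun i _ => ?_
    rw [hω i, mul_neg, hsign i]
  have hBmX : ∀ ω, (∀ i, ε' i ω = 1 ∨ ε' i ω = -1) → ω ∈ Bm →
      ∀ i, ε' i ω = -Real.sign (a' i) := by
    intro ω hωG hωB i
    have hsum : ∑ k, a' k * (-ε' k ω) = ∑ k, |a' k| := by
      have h : S ω = -c := (hmemm ω).mp hωB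
      rw [← hMeqc] at h
      have h2 : ∑ k, a' k * ε' k ω = -M := h
      calc ∑ k, a' k * (-ε' k ω) = -∑ k, a' k * ε' k ω := by
            rw [← Finset.sum_neg_distrib]
            exact Finset.sum_congr rfl fun k _ => by ring
        _ = M := by rw [h2, neg_neg]
        _ = ∑ k, |a' k| := hM_def
    have hle : ∀ k ∈ Finset.univ, a' k * (-ε' k ω) ≤ |a' k| := by
      intro k _
      calc a' k * (-ε' k ω) ≤ |a' k * (-ε' k ω)| := le_abs_self _
        _ = |a' k| := by rcases hωG k with h | h <;> rw [h] <;> simp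
    have h := (Finset.sum_eq_sum_iff_of_le hle).mp hsum i (Finset.mem_univ i)
    have h2 := mul_left_cancel₀ (hane i) (h.trans (hsign i).symm)
    linarith
  -- measures agree
  have hmeasX : ∀ (X : Set Ω) (B : Set Ω), X ⊆ B →
      (∀ ω, (∀ i, ε' i ω = 1 ∨ ε' i ω = -1) → ω ∈ B → ω ∈ X) → μ X = μ B := by
    intro X B hXB hBX
    refine le_antisymm (measure_mono hXB) ?_
    calc μ B ≤ μ (X ∪ {ω | ¬ ∀ i, ε' i ω = 1 ∨ ε' i ω = -1}) := by
          refine measure_mono fun ω hω => ?_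
          by_cases hg : ∀ i, ε' i ω = 1 ∨ ε' i ω = -1
          · exact Or.inl (hBX ω hg hω)
          · exact Or.inr hg
      _ ≤ μ X + μ {ω | ¬ ∀ i, ε' i ω = 1 ∨ ε' i ω = -1} := measure_union_le _ _
      _ = μ X := by rw [hGnull, add_zero]
  have hμp : μ {ω | ∀ i, ε' i ω = Real.sign (a' i)} = μ Bp :=
    hmeasX _ _ hXBp hBpX
  have hμm : μ {ω | ∀ i, ε' i ω = -Real.sign (a' i)} = μ Bm :=
    hmeasX _ _ hXBm hBmX
  -- final values
  have hval_final : ∀ (B : Set Ω), (μ B).toReal = 1 / (2 * N) → μ B = ((2 * N : ℕ) : ℝ≥0∞)⁻¹ := by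
    intro B hB
    have hne2 : ((2 * N : ℕ) : ℝ≥0∞)⁻¹ ≠ ⊤ := by
      rw [ENNReal.inv_ne_top]
      simp only [ne_eq, Nat.cast_eq_zero]
      omega
    refine (ENNReal.toReal_eq_toReal_iff' (measure_ne_top μ _) hne2).mp ?_
    rw [hB, ENNReal.toReal_inv, ENNReal.toReal_natCast]
    push_cast
    ring
  exact ⟨hμp ▸ hval_final Bp hrp_val, hμm ▸ hval_final Bm hrm_val⟩
end
end

section
/- Let N ≥ 6 be even, p > 2, and suppose ε' is an exchangeable, pairwise independent Rademacher vector achieving (E|∑ᵢ ε'ᵢ|^p)^{1/p} = N^{1−1/p} (equality with a = (1,...,1)). Then law(ε') = P, where P = (1/N)P_a + ((N−1)/N)P_b with P_a uniform on the two constant sign vectors and P_b uniform on balanced sign vectors. In particular P is the unique exchangeable equality case. -/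
open MeasureTheory ENNReal
noncomputable section
/-- `PA N`: uniform measure on the two constant sign vectors `(1,…,1)` and `(−1,…,−1)`. -/
def PA (N : ℕ) : Measure (Fin N → ℝ) :=
  (2 : ℝ≥0∞)⁻¹ • (Measure.dirac (fun _ => 1) + Measure.dirac (fun _ => -1))

/-- `PB N`: uniform measure on the sign vectors with exactly `N/2` coordinates equal to `1`. -/
def PB (N : ℕ) : Measure (Fin N → ℝ) :=
  ((N.choose (N / 2) : ℝ≥0∞))⁻¹ •
    ∑ T ∈ Finset.univ.filter (fun T : Finset (Fin N) => T.card = N / 2),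
      Measure.dirac (fun i => if i ∈ T then (1 : ℝ) else -1)

/-- The measure `P = (1/N) P_a + ((N-1)/N) P_b` on `{−1,1}^N`. -/
def PMeas (N : ℕ) : Measure (Fin N → ℝ) :=
  (N : ℝ≥0∞)⁻¹ • PA N + (((N : ℝ≥0∞) - 1) / N) • PB N

noncomputable section

variable {N : ℕ}

def sgn (N : ℕ) (T : Finset (Fin N)) : Fin N → ℝ := fun i => if i ∈ T then 1 else -1

lemma sgn_injective (N : ℕ) : Function.Injective (sgn N) := by
  intro T T' h
  ext i
  have := congrFun h i
  simp only [sgn] at this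
  by_cases hT : i ∈ T <;> by_cases hT' : i ∈ T' <;> simp [hT, hT'] at this ⊢ <;> norm_num at this

lemma sgn_mem_range {x : Fin N → ℝ} (hx : ∀ i, x i = 1 ∨ x i = -1) :
    x = sgn N (Finset.univ.filter (fun i => x i = 1)) := by
  ext i
  simp only [sgn, Finset.mem_filter, Finset.mem_univ, true_and]
  rcases hx i with h | h <;> simp [h] <;> norm_num

-- measure supported on sign vectors
lemma measure_eq_sum (ν : Measure (Fin N → ℝ))
    (h0 : ν {x : Fin N → ℝ | ∀ i, x i = 1 ∨ x i = -1}ᶜ = 0)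
    {s : Set (Fin N → ℝ)} (hs : MeasurableSet s) [∀ T : Finset (Fin N), Decidable (sgn N T ∈ s)] :
    ν s = ∑ T : Finset (Fin N), if sgn N T ∈ s then ν {sgn N T} else 0 := by
  classical
  set E : Set (Fin N → ℝ) := {x | ∀ i, x i = 1 ∨ x i = -1} with hE
  have hEfin : E = ↑(Finset.univ.image (sgn N)) := by
    ext x
    simp only [Finset.coe_image, Finset.coe_univ, Set.image_univ, Set.mem_range]
    constructor
    · intro hx; exact ⟨_, (sgn_mem_range hx).symm⟩
    · rintro ⟨T, rfl⟩ i; simp only [sgn]; split <;> simp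
  have hmE : MeasurableSet E := by
    rw [hEfin]; exact (Finset.univ.image (sgn N)).finite_toSet.measurableSet
  have h1 : ν s = ν (s ∩ E) := by
    have : ν (s \ E) = 0 := measure_mono_null (fun x hx => hx.2) h0
    rw [← measure_inter_add_diff s hmE, this, add_zero]
  rw [h1]
  have h2 : s ∩ E = ↑((Finset.univ.image (sgn N)).filter (· ∈ s)) := by
    rw [hEfin]; ext x; simp [and_comm]
  rw [h2]
  have h3 : ν ↑((Finset.univ.image (sgn N)).filter (· ∈ s)) =
      ∑ a ∈ (Finset.univ.image (sgn N)).filter (· ∈ s), ν {a} := by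
    rw [← measure_biUnion_finset]
    · congr 1; ext x; simp
    · intro a _ b _ hab; simp [Function.onFun, Set.disjoint_singleton, hab]
    · intro b _; exact measurableSet_singleton b
  rw [h3, Finset.sum_filter, Finset.sum_image (fun a _ b _ h => sgn_injective N h)]
  convert rfl

lemma exists_perm_image {N : ℕ} (T T' : Finset (Fin N)) (h : T.card = T'.card) :
    ∃ σ : Equiv.Perm (Fin N), T.image (σ : Fin N → Fin N) = T' := by
  classical
  have e : {x // x ∈ T} ≃ {x // x ∈ T'} := T.equivOfCardEq h
  have hc : Tᶜ.card = T'ᶜ.card := by simp [Finset.card_compl, h]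
  have f0 : {x // x ∈ Tᶜ} ≃ {x // x ∈ T'ᶜ} := Tᶜ.equivOfCardEq hc
  have f : {x // ¬ x ∈ T} ≃ {x // ¬ x ∈ T'} :=
    ((Equiv.subtypeEquivRight (fun x => (Finset.mem_compl (s := T)).symm)).trans f0).trans
      (Equiv.subtypeEquivRight (fun x => Finset.mem_compl (s := T')))
  refine ⟨(Equiv.sumCompl (· ∈ T)).symm.trans ((e.sumCongr f).trans (Equiv.sumCompl (· ∈ T'))), ?_⟩
  apply Finset.eq_of_subset_of_card_le
  · intro j hj
    simp only [Finset.mem_image] at hj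
    obtain ⟨i, hi, rfl⟩ := hj
    simp only [Equiv.trans_apply, Equiv.sumCompl_symm_apply_of_pos hi, Equiv.sumCongr_apply]
    simp
  · rw [Finset.card_image_of_injective _ (Equiv.injective _), h]

set_option maxHeartbeats 2000000 in
/-- for `N ≥ 6` even and `p > 2`, an exchangeable pairwise independent
Rademacher vector achieving `(E|∑ ε'ᵢ|^p)^{1/p} = N^{1-1/p}` has law `P = (1/N)P_a + ((N-1)/N)P_b`.
In particular `P` is the unique exchangeable equality case. -/
theorem exchangeable_equality_case_unique {Ω : Type*} [MeasurableSpace Ω]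
    (μ : Measure Ω) [IsProbabilityMeasure μ] {N : ℕ} (hN : 6 ≤ N) (hNe : Even N)
    (p : ℝ) (hp : 2 < p)
    (ε' : Fin N → Ω → ℝ) (hε : IsKWiseRademacher μ 2 ε')
    (hexch : ∀ σ : Equiv.Perm (Fin N),
      μ.map (fun ω => fun i => ε' (σ i) ω) = μ.map (fun ω => fun i => ε' i ω))
    (heq : (∫ ω, |∑ i, ε' i ω| ^ p ∂μ) ^ (1 / p) = (N : ℝ) ^ ((1 : ℝ) - 1 / p)) :
    μ.map (fun ω => fun i => ε' i ω) = PMeas N := by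
  classical
  obtain ⟨hmeas, hk⟩ := hε
  set F : Ω → (Fin N → ℝ) := fun ω i => ε' i ω with hF
  have hFm : Measurable F := measurable_pi_lambda _ (fun i => hmeas i)
  set ν : Measure (Fin N → ℝ) := μ.map F with hν
  have hνp : IsProbabilityMeasure ν := Measure.isProbabilityMeasure_map hFm.aemeasurable
  have hmc : ∀ i : Fin N, ∀ c : ℝ, MeasurableSet {x : Fin N → ℝ | x i = c} := by
    intro i c
    have : {x : Fin N → ℝ | x i = c} = (fun x : Fin N → ℝ => x i) ⁻¹' {c} := rfl
    rw [this]
    exact (measurable_pi_apply i) (measurableSet_singleton c)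
  have hmarg : ∀ (i : Fin N) (c : ℝ), c = 1 ∨ c = -1 → ν {x | x i = c} = 2⁻¹ := by
    intro i c hc
    have := hk {i} (by simp) (fun _ => c) (fun _ => hc)
    rw [hν, Measure.map_apply hFm (hmc i c)]
    convert this using 2
    · ext ω; simp [hF]
    · simp
  have hpair : ∀ i j : Fin N, i ≠ j → ν {x | x i = 1 ∧ x j = 1} = 4⁻¹ := by
    intro i j hij
    have hms : MeasurableSet {x : Fin N → ℝ | x i = 1 ∧ x j = 1} :=
      (hmc i 1).inter (hmc j 1)
    have := hk {i, j} (by rw [Finset.card_insert_of_notMem (by simpa using hij)]; simp)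
      (fun _ => 1) (fun _ => Or.inl rfl)
    rw [hν, Measure.map_apply hFm hms]
    convert this using 2
    · ext ω; simp [hF, Set.mem_setOf_eq, and_comm]
    · rw [show ({i, j} : Finset (Fin N)).card = 2 by
        rw [Finset.card_insert_of_notMem (by simpa using hij)]; simp]
      rw [pow_two, ← ENNReal.mul_inv (by norm_num) (by norm_num)]
      norm_num
  have h1i : ∀ i : Fin N, ν {x : Fin N → ℝ | ¬(x i = 1 ∨ x i = -1)} = 0 := by
    intro i
    have hA : MeasurableSet {x : Fin N → ℝ | x i = 1 ∨ x i = -1} :=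
      (hmc i 1).union (hmc i (-1))
    have hu : ν {x : Fin N → ℝ | x i = 1 ∨ x i = -1} = 1 := by
      have hd : Disjoint {x : Fin N → ℝ | x i = 1} {x : Fin N → ℝ | x i = -1} := by
        rw [Set.disjoint_left]
        rintro x h1 h2
        simp only [Set.mem_setOf_eq] at h1 h2
        rw [h1] at h2; norm_num at h2
      have he : {x : Fin N → ℝ | x i = 1 ∨ x i = -1} =
          {x : Fin N → ℝ | x i = 1} ∪ {x : Fin N → ℝ | x i = -1} := rfl
      rw [he, measure_union hd (hmc i (-1)), hmarg i 1 (Or.inl rfl), hmarg i (-1) (Or.inr rfl)]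
      rw [ENNReal.inv_two_add_inv_two]
    have hcompl := measure_compl hA (measure_ne_top ν _)
    rw [hu, measure_univ, tsub_self] at hcompl
    exact hcompl
  have h0 : ν {x : Fin N → ℝ | ∀ i, x i = 1 ∨ x i = -1}ᶜ = 0 := by
    refine measure_mono_null ?_ (measure_iUnion_null h1i)
    intro x hx
    simp only [Set.mem_compl_iff, Set.mem_setOf_eq, not_forall] at hx
    obtain ⟨i, hi⟩ := hx
    exact Set.mem_iUnion.2 ⟨i, hi⟩
  set w : Finset (Fin N) → ℝ≥0∞ := fun T => ν {sgn N T} with hwdef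
  have hsum : ∀ s : Set (Fin N → ℝ), MeasurableSet s →
      ν s = ∑ T : Finset (Fin N), if sgn N T ∈ s then w T else 0 :=
    fun s hs => measure_eq_sum ν h0 hs
  have sgn_comp : ∀ (σ : Equiv.Perm (Fin N)) (T : Finset (Fin N)),
      sgn N (T.image σ) = fun j => sgn N T (σ.symm j) := by
    intro σ T
    ext j
    simp only [sgn, Finset.mem_image]
    have : (∃ a ∈ T, σ a = j) ↔ σ.symm j ∈ T := by
      constructor
      · rintro ⟨a, ha, rfl⟩; simpa using ha
      · intro h; exact ⟨σ.symm j, h, by simp⟩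
    simp [this]
  have hperm : ∀ (σ : Equiv.Perm (Fin N)) (T : Finset (Fin N)), w (T.image σ) = w T := by
    intro σ T
    have hg : Measurable (fun x : Fin N → ℝ => fun i => x (σ i)) :=
      measurable_pi_lambda _ (fun i => measurable_pi_apply _)
    have hmap : ν.map (fun x : Fin N → ℝ => fun i => x (σ i)) = ν := by
      rw [hν, Measure.map_map hg hFm]
      exact hexch σ
    have hpre : (fun x : Fin N → ℝ => fun i => x (σ i)) ⁻¹' {sgn N T} = {sgn N (T.image σ)} := by
      ext x
      simp only [Set.mem_preimage, Set.mem_singleton_iff, sgn_comp σ T]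
      constructor
      · intro h; ext j; exact congrFun h (σ.symm j) |>.symm ▸ (by
          have := congrFun h (σ.symm j); simpa using this)
      · intro h; ext i; rw [congrFun h (σ i)]; simp
    symm
    calc w T = ν {sgn N T} := rfl
    _ = ν.map (fun x : Fin N → ℝ => fun i => x (σ i)) {sgn N T} := by rw [hmap]
    _ = ν ((fun x : Fin N → ℝ => fun i => x (σ i)) ⁻¹' {sgn N T}) :=
        Measure.map_apply hg (measurableSet_singleton _)
    _ = w (T.image σ) := by rw [hpre]
  have hcard : ∀ T T' : Finset (Fin N), T.card = T'.card → w T = w T' := by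
    intro T T' h
    obtain ⟨σ, hσ⟩ := exists_perm_image T T' h
    rw [← hσ, hperm]
  have hw_ne_top : ∀ T : Finset (Fin N), w T ≠ ⊤ := fun T => measure_ne_top ν _
  set wr : Finset (Fin N) → ℝ := fun T => (w T).toReal with hwrdef
  have hwr_nn : ∀ T, 0 ≤ wr T := fun T => ENNReal.toReal_nonneg
  -- total mass
  have hmassE : ∑ T : Finset (Fin N), w T = 1 := by
    have := hsum Set.univ MeasurableSet.univ
    simpa [measure_univ] using this.symm
  have hmass : ∑ T : Finset (Fin N), wr T = 1 := by
    have := ENNReal.toReal_sum (s := Finset.univ) (f := w) (fun T _ => hw_ne_top T)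
    rw [hmassE] at this
    simpa using this.symm
  -- single-coordinate marginals
  have hs1R : ∀ i : Fin N, ∑ T : Finset (Fin N), (if i ∈ T then wr T else 0) = 1/2 := by
    intro i
    have hE : ∑ T : Finset (Fin N), (if i ∈ T then w T else 0) = 2⁻¹ := by
      have h := hsum {x | x i = 1} (hmc i 1)
      rw [hmarg i 1 (Or.inl rfl)] at h
      rw [h]
      refine Finset.sum_congr rfl (fun T _ => ?_)
      have : (sgn N T ∈ {x : Fin N → ℝ | x i = 1}) ↔ i ∈ T := by
        simp only [Set.mem_setOf_eq, sgn]
        by_cases hi : i ∈ T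
        · simp [hi]
        · simp only [hi, if_neg, iff_false]
          simp only [if_false]
          norm_num
      simp [this]
    have := congrArg ENNReal.toReal hE
    rw [ENNReal.toReal_sum (fun T _ => by split <;> simp [hw_ne_top])] at this
    simp only [apply_ite ENNReal.toReal, ENNReal.toReal_zero] at this
    rw [this]
    norm_num
  -- pair marginals
  have hs2R : ∀ i j : Fin N, i ≠ j →
      ∑ T : Finset (Fin N), (if i ∈ T ∧ j ∈ T then wr T else 0) = 1/4 := by
    intro i j hij
    have hE : ∑ T : Finset (Fin N), (if i ∈ T ∧ j ∈ T then w T else 0) = 4⁻¹ := by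
      have h := hsum {x | x i = 1 ∧ x j = 1} ((hmc i 1).inter (hmc j 1))
      rw [hpair i j hij] at h
      rw [h]
      refine Finset.sum_congr rfl (fun T _ => ?_)
      have : (sgn N T ∈ {x : Fin N → ℝ | x i = 1 ∧ x j = 1}) ↔ (i ∈ T ∧ j ∈ T) := by
        simp only [Set.mem_setOf_eq, sgn]
        constructor
        · rintro ⟨h1, h2⟩
          constructor
          · by_contra hc; simp [hc] at h1; norm_num at h1
          · by_contra hc; simp [hc] at h2; norm_num at h2
        · rintro ⟨h1, h2⟩; simp [h1, h2]
      simp [this]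
    have := congrArg ENNReal.toReal hE
    rw [ENNReal.toReal_sum (fun T _ => by split <;> simp [hw_ne_top])] at this
    simp only [apply_ite ENNReal.toReal, ENNReal.toReal_zero] at this
    rw [this]
    norm_num
  -- first moment
  have hm1 : ∑ T : Finset (Fin N), wr T * (T.card : ℝ) = N / 2 := by
    have hswap : ∑ i : Fin N, ∑ T : Finset (Fin N), (if i ∈ T then wr T else 0)
        = ∑ T : Finset (Fin N), wr T * (T.card : ℝ) := by
      rw [Finset.sum_comm]
      refine Finset.sum_congr rfl (fun T _ => ?_)
      rw [Finset.sum_ite_mem, Finset.univ_inter, Finset.sum_const, nsmul_eq_mul, mul_comm]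
    rw [← hswap]
    simp only [hs1R]
    rw [Finset.sum_const, Finset.card_univ, Fintype.card_fin, nsmul_eq_mul]
    ring
  -- second moment
  have hm2 : ∑ T : Finset (Fin N), wr T * ((T.card : ℝ) * T.card - T.card)
      = ((N : ℝ) * N - N) / 4 := by
    have hswap : ∑ z ∈ Finset.univ.offDiag, ∑ T : Finset (Fin N),
        (if z.1 ∈ T ∧ z.2 ∈ T then wr T else 0)
        = ∑ T : Finset (Fin N), wr T * ((T.card : ℝ) * T.card - T.card) := by
      rw [Finset.sum_comm]
      refine Finset.sum_congr rfl (fun T _ => ?_)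
      rw [Finset.sum_ite, Finset.sum_const, Finset.sum_const_zero, add_zero, nsmul_eq_mul]
      have hfil : Finset.univ.offDiag.filter (fun z : Fin N × Fin N => z.1 ∈ T ∧ z.2 ∈ T)
          = T.offDiag := by
        ext z
        simp only [Finset.mem_filter, Finset.mem_offDiag, Finset.mem_univ, true_and]
        tauto
      rw [hfil, Finset.offDiag_card]
      have hle : T.card ≤ T.card * T.card := by
        rcases Nat.eq_zero_or_pos T.card with h | h
        · simp [h]
        · exact Nat.le_mul_of_pos_left _ h
      rw [Nat.cast_sub hle]
      push_cast
      ring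
    rw [← hswap]
    have hconst : ∀ z ∈ (Finset.univ.offDiag : Finset (Fin N × Fin N)),
        ∑ T : Finset (Fin N), (if z.1 ∈ T ∧ z.2 ∈ T then wr T else 0) = 1/4 := by
      intro z hz
      exact hs2R z.1 z.2 (Finset.mem_offDiag.1 hz).2.2
    rw [Finset.sum_congr rfl hconst, Finset.sum_const, Finset.offDiag_card,
      Finset.card_univ, Fintype.card_fin, nsmul_eq_mul]
    have hle : N ≤ N * N := by nlinarith
    rw [Nat.cast_sub hle]
    push_cast
    ring
  -- nu as sum of diracs
  have hνeq : ν = ∑ T : Finset (Fin N), w T • Measure.dirac (sgn N T) := by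
    ext s hs
    rw [hsum s hs, Measure.finset_sum_apply]
    refine Finset.sum_congr rfl (fun T _ => ?_)
    rw [Measure.smul_apply, Measure.dirac_apply' _ hs, smul_eq_mul]
    by_cases h : sgn N T ∈ s
    · simp [h, Set.indicator_of_mem]
    · simp [h, Set.indicator_of_notMem]
  -- sum of sgn
  have hcard_le : ∀ T : Finset (Fin N), T.card ≤ N := by
    intro T
    simpa using Finset.card_le_card (Finset.subset_univ T)
  have hsgn_sum : ∀ T : Finset (Fin N), ∑ i, sgn N T i = 2 * (T.card : ℝ) - N := by
    intro T
    unfold sgn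
    rw [Finset.sum_ite, Finset.sum_const, Finset.sum_const]
    have h1 : Finset.univ.filter (fun x => x ∈ T) = T := by
      ext x; simp
    have h2 : Finset.univ.filter (fun x => x ∉ T) = Tᶜ := by
      ext x; simp
    rw [h1, h2, Finset.card_compl, Fintype.card_fin, nsmul_eq_mul, nsmul_eq_mul,
      Nat.cast_sub (hcard_le T)]
    push_cast
    ring
  -- continuity of the integrand
  have hp0 : (0 : ℝ) < p := by linarith
  have hfc : Continuous fun x : Fin N → ℝ => |∑ i, x i| ^ p := by
    refine Continuous.rpow_const ?_ (fun x => Or.inr hp0.le)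
    exact continuous_abs.comp (continuous_finset_sum _ (fun i _ => continuous_apply i))
  -- integral as a finite sum
  have hint : (∫ ω, |∑ i, ε' i ω| ^ p ∂μ)
      = ∑ T : Finset (Fin N), wr T * |2 * (T.card : ℝ) - N| ^ p := by
    have h1 : (∫ ω, |∑ i, ε' i ω| ^ p ∂μ)
        = ∫ x, |∑ i, x i| ^ p ∂ν := by
      rw [hν, integral_map hFm.aemeasurable hfc.aestronglyMeasurable]
    have hfint : ∀ a : Fin N → ℝ,
        Integrable (fun x : Fin N → ℝ => |∑ i, x i| ^ p) (Measure.dirac a) := by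
      intro a
      refine ⟨hfc.aestronglyMeasurable, ?_⟩
      have hfin : HasFiniteIntegral (fun x : Fin N → ℝ => |∑ i, x i| ^ p) (Measure.dirac a) := by
        rw [HasFiniteIntegral, lintegral_dirac' a
          (hfc.measurable.enorm)]
        exact ENNReal.coe_lt_top
      exact hfin
    rw [h1, hνeq, integral_finset_sum_measure
      (fun T _ => (hfint (sgn N T)).smul_measure (hw_ne_top T))]
    refine Finset.sum_congr rfl (fun T _ => ?_)
    rw [integral_smul_measure, integral_dirac, hsgn_sum T, smul_eq_mul]
  -- equality of p-th moments
  have hA_nn : (0:ℝ) ≤ ∑ T : Finset (Fin N), wr T * |2 * (T.card : ℝ) - N| ^ p :=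
    Finset.sum_nonneg (fun T _ => mul_nonneg (hwr_nn T) (Real.rpow_nonneg (abs_nonneg _) p))
  have hNpos : (0:ℝ) < N := by
    have h6 : 0 < N := lt_of_lt_of_le (by norm_num) hN
    exact_mod_cast h6
  have hmomp : ∑ T : Finset (Fin N), wr T * |2 * (T.card : ℝ) - N| ^ p
      = (N : ℝ) ^ (p - 1) := by
    have h2 := heq
    rw [hint] at h2
    have hpne : p ≠ 0 := ne_of_gt hp0
    calc ∑ T : Finset (Fin N), wr T * |2 * (T.card : ℝ) - N| ^ p
        = (∑ T : Finset (Fin N), wr T * |2 * (T.card : ℝ) - N| ^ p) ^ (1:ℝ) :=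
          (Real.rpow_one _).symm
      _ = (∑ T : Finset (Fin N), wr T * |2 * (T.card : ℝ) - N| ^ p) ^ ((1/p) * p) := by
          rw [one_div, inv_mul_cancel₀ hpne]
      _ = ((∑ T : Finset (Fin N), wr T * |2 * (T.card : ℝ) - N| ^ p) ^ (1/p)) ^ p :=
          Real.rpow_mul hA_nn _ _
      _ = ((N:ℝ) ^ ((1:ℝ) - 1/p)) ^ p := by rw [h2]
      _ = (N:ℝ) ^ (((1:ℝ) - 1/p) * p) := (Real.rpow_mul hNpos.le _ _).symm
      _ = (N:ℝ) ^ (p - 1) := by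
          congr 1
          field_simp
  -- quadratic moment
  have hq : ∑ T : Finset (Fin N), wr T * (2*(T.card:ℝ) - N)^2 = (N:ℝ) := by
    have expand : ∀ T ∈ Finset.univ (α := Finset (Fin N)), wr T * (2*(T.card:ℝ) - N)^2
        = 4*(wr T * ((T.card:ℝ)*T.card - T.card)) + ((4:ℝ) - 4*N)*(wr T * T.card)
          + (N:ℝ)^2 * wr T := by
      intro T _; ring
    rw [Finset.sum_congr rfl expand, Finset.sum_add_distrib, Finset.sum_add_distrib,
      ← Finset.mul_sum, ← Finset.mul_sum, ← Finset.mul_sum]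
    have hm1' : ∑ T : Finset (Fin N), wr T * (T.card : ℝ) = N / 2 := hm1
    rw [hm1', hm2, hmass]
    ring
  -- pointwise bound
  have hp2 : (0:ℝ) < p - 2 := by linarith
  have hptwise : ∀ a : ℝ, 0 ≤ a → a ≤ N → a ^ p ≤ (N:ℝ) ^ (p-2) * a^2 := by
    intro a ha haN
    rcases eq_or_lt_of_le ha with h' | h'
    · rw [← h', Real.zero_rpow (ne_of_gt hp0)]
      positivity
    · have h1 : a ^ p = a ^ (p-2) * a^2 := by
        rw [← Real.rpow_natCast a 2, ← Real.rpow_add h']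
        norm_num
      rw [h1]
      have h2 : a ^ (p-2) ≤ (N:ℝ) ^ (p-2) := Real.rpow_le_rpow ha haN hp2.le
      exact mul_le_mul_of_nonneg_right h2 (by positivity)
  have hptwise_strict : ∀ a : ℝ, 0 < a → a < N → a ^ p < (N:ℝ) ^ (p-2) * a^2 := by
    intro a ha haN
    have h1 : a ^ p = a ^ (p-2) * a^2 := by
      rw [← Real.rpow_natCast a 2, ← Real.rpow_add ha]
      norm_num
    rw [h1]
    have h2 : a ^ (p-2) < (N:ℝ) ^ (p-2) := Real.rpow_lt_rpow ha.le haN hp2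
    exact mul_lt_mul_of_pos_right h2 (by positivity)
  -- termwise equality
  have hle_t : ∀ T ∈ Finset.univ (α := Finset (Fin N)),
      wr T * |2*(T.card:ℝ) - N| ^ p ≤ wr T * ((N:ℝ)^(p-2) * (2*(T.card:ℝ) - N)^2) := by
    intro T _
    have habs : |2*(T.card:ℝ) - N| ≤ N := by
      rw [abs_le]
      have h1 : (0:ℝ) ≤ (T.card : ℝ) := Nat.cast_nonneg _
      have h2 : (T.card : ℝ) ≤ N := by exact_mod_cast hcard_le T
      constructor <;> linarith
    have := hptwise _ (abs_nonneg (2*(T.card:ℝ) - N)) habs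
    rw [sq_abs] at this
    exact mul_le_mul_of_nonneg_left this (hwr_nn T)
  have hsum_ub : ∑ T : Finset (Fin N), wr T * ((N:ℝ)^(p-2) * (2*(T.card:ℝ) - N)^2)
      = (N:ℝ) ^ (p-1) := by
    have : ∀ T ∈ Finset.univ (α := Finset (Fin N)),
        wr T * ((N:ℝ)^(p-2) * (2*(T.card:ℝ) - N)^2)
        = (N:ℝ)^(p-2) * (wr T * (2*(T.card:ℝ) - N)^2) := by intro T _; ring
    rw [Finset.sum_congr rfl this, ← Finset.mul_sum, hq,
      ← Real.rpow_add_one (ne_of_gt hNpos) (p-2)]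
    congr 1
    ring
  have hterm : ∀ T ∈ Finset.univ (α := Finset (Fin N)),
      wr T * |2*(T.card:ℝ) - N| ^ p = wr T * ((N:ℝ)^(p-2) * (2*(T.card:ℝ) - N)^2) := by
    rw [← Finset.sum_eq_sum_iff_of_le hle_t]
    rw [hmomp, hsum_ub]
  -- support of w
  have h2h : 2 * (N / 2) = N := by
    obtain ⟨m, hm⟩ := hNe
    omega
  have hsupp : ∀ T : Finset (Fin N), wr T ≠ 0 →
      T.card = 0 ∨ T.card = N / 2 ∨ T.card = N := by
    intro T hT
    have hterm' := hterm T (Finset.mem_univ T)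
    have heqa : |2*(T.card:ℝ) - N| ^ p = (N:ℝ)^(p-2) * (2*(T.card:ℝ) - N)^2 :=
      mul_left_cancel₀ hT hterm'
    by_contra hc
    push_neg at hc
    obtain ⟨hc0, hch, hcN⟩ := hc
    have hcle : (T.card : ℝ) ≤ N := by exact_mod_cast hcard_le T
    have hcnn : (0:ℝ) ≤ (T.card : ℝ) := Nat.cast_nonneg _
    have ha_pos : 0 < |2*(T.card:ℝ) - N| := by
      rw [abs_pos]
      intro hzero
      apply hch
      have : 2 * T.card = N := by exact_mod_cast (by linarith : 2*(T.card:ℝ) = N)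
      omega
    have ha_lt : |2*(T.card:ℝ) - N| < N := by
      rw [abs_lt]
      constructor
      · have : (T.card:ℝ) ≠ 0 := by
          intro hzz; apply hc0; exact_mod_cast hzz
        have : (0:ℝ) < T.card := lt_of_le_of_ne hcnn (Ne.symm this)
        linarith
      · have : (T.card:ℝ) ≠ N := by
          intro hzz; apply hcN; exact_mod_cast hzz
        have : (T.card:ℝ) < N := lt_of_le_of_ne hcle this
        linarith
    have := hptwise_strict _ ha_pos ha_lt
    rw [sq_abs] at this
    rw [heqa] at this
    exact lt_irrefl _ this
  -- splitting sums according to support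
  set bal : Finset (Finset (Fin N)) :=
    Finset.univ.filter (fun T : Finset (Fin N) => T.card = N / 2) with hbaldef
  have hkey : ∀ g : ℕ → ℝ, ∑ T : Finset (Fin N), wr T * g T.card
      = wr ∅ * g 0 + (∑ T ∈ bal, wr T) * g (N/2) + wr Finset.univ * g N := by
    intro g
    have hpt : ∀ T ∈ Finset.univ (α := Finset (Fin N)), wr T * g T.card
        = g 0 * (if T = (∅ : Finset (Fin N)) then wr T else 0)
          + g (N/2) * (if T.card = N/2 then wr T else 0)
          + g N * (if T = Finset.univ then wr T else 0) := by
      intro T _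
      by_cases hw0 : wr T = 0
      · simp [hw0]
      · rcases hsupp T hw0 with h1 | h1 | h1
        · have hTe : T = ∅ := Finset.card_eq_zero.1 h1
          subst hTe
          have hx1 : ¬ ((∅ : Finset (Fin N)).card = N/2) := by
            simp only [Finset.card_empty]; omega
          have hx2 : (∅ : Finset (Fin N)) ≠ Finset.univ := by
            intro h022
            have h022' := congrArg Finset.card h022
            rw [Finset.card_empty, Finset.card_univ, Fintype.card_fin] at h022'
            omega
          simp only [Finset.card_empty]
          simp only [show ¬ ((0:ℕ) = N/2) by omega, if_false, if_neg hx2]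
          simp only [if_true]
          ring
        · have hne : T ≠ ∅ := by
            intro he; rw [he, Finset.card_empty] at h1; omega
          have hnu : T ≠ Finset.univ := by
            intro he; rw [he, Finset.card_univ, Fintype.card_fin] at h1; omega
          rw [if_neg hne, if_pos h1, if_neg hnu, h1]
          ring
        · have hTu : T = Finset.univ := by
            apply Finset.eq_univ_of_card; rw [h1, Fintype.card_fin]
          subst hTu
          have hx1 : ¬ ((Finset.univ : Finset (Fin N)).card = N/2) := by
            rw [Finset.card_univ, Fintype.card_fin]; omega
          have hx2 : (Finset.univ : Finset (Fin N)) ≠ ∅ := by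
            intro he
            have he' := congrArg Finset.card he
            rw [Finset.card_empty, Finset.card_univ, Fintype.card_fin] at he'
            omega
          rw [if_neg hx2, if_neg hx1, if_pos rfl, Finset.card_univ, Fintype.card_fin]
          ring
    rw [Finset.sum_congr rfl hpt, Finset.sum_add_distrib, Finset.sum_add_distrib,
      ← Finset.mul_sum, ← Finset.mul_sum, ← Finset.mul_sum,
      Finset.sum_ite_eq' Finset.univ (∅ : Finset (Fin N)) wr,
      Finset.sum_ite_eq' Finset.univ (Finset.univ : Finset (Fin N)) wr,
      ← Finset.sum_filter]
    simp only [Finset.mem_univ, if_pos]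
    rw [← hbaldef]
    ring
  set Sb : ℝ := ∑ T ∈ bal, wr T with hSbdef
  set hr : ℝ := ((N / 2 : ℕ) : ℝ) with hhrdef
  have hrel : 2 * hr = (N:ℝ) := by rw [hhrdef]; exact_mod_cast h2h
  have hr3 : (3:ℝ) ≤ hr := by rw [hhrdef]; exact_mod_cast (by omega : 3 ≤ N/2)
  have hrne : hr ≠ 0 := by linarith
  have e1 : wr ∅ + Sb + wr Finset.univ = 1 := by
    have hk := hkey (fun _ => 1)
    simp only [mul_one] at hk
    rw [hmass] at hk
    linarith [hk]
  have e2 : Sb * hr + wr Finset.univ * (N:ℝ) = (N:ℝ)/2 := by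
    have hk := hkey (fun k => (k:ℝ))
    rw [hm1] at hk
    simp only [Nat.cast_zero, mul_zero, zero_add] at hk
    linarith [hk]
  have e3 : Sb * (hr*hr - hr) + wr Finset.univ * ((N:ℝ)*N - N) = ((N:ℝ)*N - N)/4 := by
    have hk := hkey (fun k => (k:ℝ)*(k:ℝ) - (k:ℝ))
    rw [hm2] at hk
    simp only [Nat.cast_zero, mul_zero, zero_sub, sub_zero, zero_mul] at hk
    linarith [hk]
  have ekey2 : wr Finset.univ * (4*hr) * hr = 1 * hr := by
    rw [← hrel] at e2 e3
    linear_combination 2*e3 - (2*hr-2)*e2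
  have ecU : wr Finset.univ * (4*hr) = 1 := mul_right_cancel₀ hrne ekey2
  have eSb : Sb * (2*hr) = 2*hr - 1 := by
    rw [← hrel] at e2
    linear_combination 2*e2 - ecU
  have ec0 : wr ∅ * (4*hr) = 1 := by linear_combination (4*hr)*e1 - 2*eSb - ecU
  -- balanced sets all have the same weight
  have hbal_w : ∀ T ∈ bal, Sb = (bal.card : ℝ) * wr T := by
    intro T hT
    rw [hSbdef]
    have hcg : ∀ T' ∈ bal, wr T' = wr T := by
      intro T' hT'
      have hww : w T' = w T := hcard _ _ (by
        rw [(Finset.mem_filter.1 hT').2, (Finset.mem_filter.1 hT).2])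
      simp [hwrdef, hww]
    rw [Finset.sum_congr rfl hcg, Finset.sum_const, nsmul_eq_mul]
  have hbalcard : bal.card = N.choose (N/2) := by
    rw [hbaldef, ← Finset.powerset_univ, ← Finset.powersetCard_eq_filter,
      Finset.card_powersetCard, Finset.card_univ, Fintype.card_fin]
  -- real values
  have h4hr : 4 * hr = 2 * (N:ℝ) := by linarith
  have hNr2 : (0:ℝ) < 2 * (N:ℝ) := by linarith
  have hCpos : 0 < N.choose (N/2) := Nat.choose_pos (by omega)
  have hCr : (0:ℝ) < (N.choose (N/2) : ℝ) := by exact_mod_cast hCpos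
  have hwrU : wr Finset.univ = (2*(N:ℝ))⁻¹ := by
    rw [h4hr] at ecU
    have hne : 2*(N:ℝ) ≠ 0 := ne_of_gt hNr2
    field_simp
    linear_combination ecU
  have hwr0 : wr ∅ = (2*(N:ℝ))⁻¹ := by
    rw [h4hr] at ec0
    have hne : 2*(N:ℝ) ≠ 0 := ne_of_gt hNr2
    field_simp
    linear_combination ec0
  have hwrb : ∀ T ∈ bal, wr T = ((N:ℝ) - 1) / ((N:ℝ) * (N.choose (N/2) : ℝ)) := by
    intro T hT
    have h1 := hbal_w T hT
    rw [hbalcard] at h1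
    have h2 : Sb * (N:ℝ) = (N:ℝ) - 1 := by
      rw [← hrel]
      linear_combination eSb
    rw [h1] at h2
    have hne : (N:ℝ) * (N.choose (N/2) : ℝ) ≠ 0 := by positivity
    field_simp
    linear_combination h2
  -- ENNReal values
  have hwE : ∀ T : Finset (Fin N), w T = ENNReal.ofReal (wr T) :=
    fun T => (ENNReal.ofReal_toReal (hw_ne_top T)).symm
  have hofr2N : ENNReal.ofReal ((2*(N:ℝ))⁻¹) = (N:ℝ≥0∞)⁻¹ * 2⁻¹ := by
    rw [ENNReal.ofReal_inv_of_pos hNr2,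
      show 2*(N:ℝ) = ((2*N : ℕ):ℝ) by push_cast; ring, ENNReal.ofReal_natCast,
      show ((2*N : ℕ) : ℝ≥0∞) = (N:ℝ≥0∞) * 2 by push_cast; ring,
      ENNReal.mul_inv (Or.inl (by exact_mod_cast (by omega : N ≠ 0))) (Or.inl (natCast_ne_top N))]
  have hwUE : w Finset.univ = (N:ℝ≥0∞)⁻¹ * 2⁻¹ := by
    rw [hwE, hwrU, hofr2N]
  have hw0E : w ∅ = (N:ℝ≥0∞)⁻¹ * 2⁻¹ := by
    rw [hwE, hwr0, hofr2N]
  have hwbE : ∀ T ∈ bal, w T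
      = ((N:ℝ≥0∞) - 1)/(N:ℝ≥0∞) * ((N.choose (N/2) : ℝ≥0∞))⁻¹ := by
    intro T hT
    rw [hwE, hwrb T hT]
    have hstep : ENNReal.ofReal (((N:ℝ) - 1) / ((N:ℝ) * (N.choose (N/2) : ℝ)))
        = ((N - 1 : ℕ) : ℝ≥0∞) / ((N * N.choose (N/2) : ℕ) : ℝ≥0∞) := by
      rw [ENNReal.ofReal_div_of_pos (by positivity),
        show (N:ℝ) - 1 = ((N - 1 : ℕ):ℝ) by
          rw [Nat.cast_sub (by omega : 1 ≤ N)]; simp,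
        show (N:ℝ) * (N.choose (N/2) : ℝ) = ((N * N.choose (N/2) : ℕ) : ℝ) by push_cast; ring,
        ENNReal.ofReal_natCast, ENNReal.ofReal_natCast]
    rw [hstep, ENNReal.natCast_sub]
    rw [show ((N * N.choose (N/2) : ℕ) : ℝ≥0∞) = (N:ℝ≥0∞) * (N.choose (N/2) : ℝ≥0∞) by push_cast; ring]
    rw [div_eq_mul_inv, div_eq_mul_inv,
      ENNReal.mul_inv (Or.inl (by exact_mod_cast (by omega : N ≠ 0))) (Or.inl (natCast_ne_top N)),
      Nat.cast_one, mul_assoc]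
  -- splitting measures of sets
  have hsplit : ∀ s : Set (Fin N → ℝ), MeasurableSet s →
      ν s = (if sgn N ∅ ∈ s then w ∅ else 0)
        + (∑ T ∈ bal, if sgn N T ∈ s then w T else 0)
        + (if sgn N Finset.univ ∈ s then w Finset.univ else 0) := by
    intro s hs
    rw [hsum s hs]
    have hpt : ∀ T ∈ Finset.univ (α := Finset (Fin N)),
        (if sgn N T ∈ s then w T else 0)
        = (if T = (∅ : Finset (Fin N)) then (if sgn N T ∈ s then w T else 0) else 0)
          + (if T.card = N/2 then (if sgn N T ∈ s then w T else 0) else 0)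
          + (if T = Finset.univ then (if sgn N T ∈ s then w T else 0) else 0) := by
      intro T _
      by_cases hw0 : w T = 0
      · by_cases hmem : sgn N T ∈ s <;> simp [hmem, hw0]
      · have hwr0 : wr T ≠ 0 := by
          rw [hwrdef]
          simp only [ne_eq, ENNReal.toReal_eq_zero_iff, not_or]
          exact ⟨hw0, hw_ne_top T⟩
        rcases hsupp T hwr0 with h1 | h1 | h1
        · have hTe : T = ∅ := Finset.card_eq_zero.1 h1
          have hx1 : ¬ (T.card = N/2) := by rw [h1]; omega
          have hx2 : T ≠ Finset.univ := by
            intro he; rw [he, Finset.card_univ, Fintype.card_fin] at h1; omega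
          rw [if_pos hTe, if_neg hx1, if_neg hx2, add_zero, add_zero]
        · have hx0 : T ≠ ∅ := by intro he; rw [he, Finset.card_empty] at h1; omega
          have hx2 : T ≠ Finset.univ := by
            intro he; rw [he, Finset.card_univ, Fintype.card_fin] at h1; omega
          rw [if_neg hx0, if_pos h1, if_neg hx2, add_zero, zero_add]
        · have hTu : T = Finset.univ := by
            apply Finset.eq_univ_of_card; rw [h1, Fintype.card_fin]
          have hx0 : T ≠ ∅ := by intro he; rw [he, Finset.card_empty] at h1; omega
          have hx1 : ¬ (T.card = N/2) := by rw [h1]; omega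
          rw [if_neg hx0, if_neg hx1, if_pos hTu, zero_add, zero_add]
    rw [Finset.sum_congr rfl hpt, Finset.sum_add_distrib, Finset.sum_add_distrib,
      Finset.sum_ite_eq' Finset.univ (∅ : Finset (Fin N)),
      Finset.sum_ite_eq' Finset.univ (Finset.univ : Finset (Fin N)),
      ← Finset.sum_filter, ← hbaldef]
    simp only [Finset.mem_univ, if_pos]
  -- final identification
  refine Measure.ext (fun s hs => ?_)
  rw [hsplit s hs]
  have hPB : PB N s = ((N.choose (N/2) : ℝ≥0∞))⁻¹
      * ∑ T ∈ bal, (if sgn N T ∈ s then (1:ℝ≥0∞) else 0) := by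
    rw [PB, Measure.smul_apply, smul_eq_mul, Measure.finset_sum_apply, ← hbaldef]
    congr 1
    refine Finset.sum_congr rfl (fun T _ => ?_)
    rw [Measure.dirac_apply' _ hs]
    have hfun : (fun i => if i ∈ T then (1:ℝ) else -1) = sgn N T := rfl
    rw [hfun]
    simp [Set.indicator_apply]
  have hPA : PA N s = 2⁻¹ * ((if sgn N Finset.univ ∈ s then (1:ℝ≥0∞) else 0)
      + (if sgn N ∅ ∈ s then (1:ℝ≥0∞) else 0)) := by
    rw [PA, Measure.smul_apply, smul_eq_mul, Measure.add_apply,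
      Measure.dirac_apply' _ hs, Measure.dirac_apply' _ hs]
    have e1 : (fun _ : Fin N => (1:ℝ)) = sgn N Finset.univ := by
      funext i; simp [sgn]
    have e2 : (fun _ : Fin N => (-1:ℝ)) = sgn N ∅ := by
      funext i; simp [sgn]
    rw [e1, e2]
    simp [Set.indicator_apply]
  have hmid : ∑ T ∈ bal, (if sgn N T ∈ s then w T else 0)
      = (((N:ℝ≥0∞) - 1)/(N:ℝ≥0∞) * ((N.choose (N/2) : ℝ≥0∞))⁻¹)
        * ∑ T ∈ bal, (if sgn N T ∈ s then (1:ℝ≥0∞) else 0) := by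
    rw [Finset.mul_sum]
    refine Finset.sum_congr rfl (fun T hT => ?_)
    rw [hwbE T hT]
    by_cases hmem : sgn N T ∈ s <;> simp [hmem]
  rw [PMeas, Measure.add_apply, Measure.smul_apply, Measure.smul_apply,
    smul_eq_mul, smul_eq_mul, hPA, hPB, hmid, hw0E, hwUE]
  have hite : ∀ (c : Prop) [Decidable c] (k : ℝ≥0∞),
      (if c then k else 0) = k * (if c then 1 else 0) := by
    intro c _ k
    by_cases h : c <;> simp [h]
  rw [hite (sgn N ∅ ∈ s) ((N:ℝ≥0∞)⁻¹ * 2⁻¹),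
    hite (sgn N Finset.univ ∈ s) ((N:ℝ≥0∞)⁻¹ * 2⁻¹)]
  ring
end
end
end
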